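/- arXiv:2503.09440 — 9 statements merged into one kernel-verified Lean document; each statement's English description precedes it below -/
import Mathlib

section
/- If a finite simple graph G has a strong elimination order v₁,…,vₙ (n ≥ 1), then G has a compatible tree representation {T(v)} whose host tree has exactly n nodes, namely the pairwise distinct roots 𝐯₁,…,𝐯ₙ of the subtrees T(v₁),…,T(vₙ), in which the root 𝐯ⱼ has depth n−j for every j ∈ {1,…,n}; moreover the representation can be chosen so that T(vₗ) overshadows T(vₖ) whenever k < ℓ. -/
/-- A host tree: a finite tree (connected acyclic simple graph on a nonempty
finite node set) with a distinguished root and positive real edge weights. -/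
structure HostTree where
  V : Type
  [fintypeV : Fintype V]
  [nonemptyV : Nonempty V]
  G : SimpleGraph V
  isTree : G.IsTree
  root : V
  w : V → V → ℝ
  w_symm : ∀ x y : V, w x y = w y x
  w_pos : ∀ x y : V, G.Adj x y → 0 < w x y

attribute [instance] HostTree.fintypeV HostTree.nonemptyV

/-- The unique path in the host tree from the root to a node. -/
noncomputable def HostTree.rootPath (T : HostTree) (x : T.V) : T.G.Walk T.root x :=
  (T.isTree.existsUnique_path T.root x).choose

/-- The depth of a node: the sum of the weights of the edges on the unique
path from the root to the node. -/
noncomputable def HostTree.depth (T : HostTree) (x : T.V) : ℝ :=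
  ((T.rootPath x).darts.map (fun d => T.w d.toProd.1 d.toProd.2)).sum

/-- A subtree of the host tree: a nonempty set of nodes inducing a connected
subgraph. -/
def HostTree.IsSubtree (T : HostTree) (S : Set T.V) : Prop :=
  S.Nonempty ∧ (T.G.induce S).Connected

/-- `S₁` overshadows `S₂`: every node of `S₂ \ S₁` has strictly greater depth
than every node of `S₂ ∩ S₁`. -/
def HostTree.Overshadows (T : HostTree) (S₁ S₂ : Set T.V) : Prop :=
  ∀ x ∈ S₂ \ S₁, ∀ y ∈ S₂ ∩ S₁, T.depth y < T.depth x

/-- Two subtrees are compatible if one overshadows the other. -/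
def HostTree.CompatiblePair (T : HostTree) (S₁ S₂ : Set T.V) : Prop :=
  T.Overshadows S₁ S₂ ∨ T.Overshadows S₂ S₁

/-- `x` is the root of the subtree `S`: a node of `S` of minimum depth. -/
def HostTree.IsSubtreeRoot (T : HostTree) (S : Set T.V) (x : T.V) : Prop :=
  x ∈ S ∧ ∀ y ∈ S, T.depth x ≤ T.depth y

/-- The closed neighbourhood `N[v]` of a vertex. -/
def closedNbhd {α : Type*} (G : SimpleGraph α) (v : α) : Set α :=
  insert v (G.neighborSet v)

/-- A tree representation of `G`: a subtree `t v` of the host tree for every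
vertex `v`, such that distinct vertices are adjacent iff their subtrees meet. -/
def IsTreeRep {α : Type*} (G : SimpleGraph α) (T : HostTree) (t : α → Set T.V) : Prop :=
  (∀ v : α, T.IsSubtree (t v)) ∧
  ∀ u v : α, u ≠ v → (G.Adj u v ↔ (t u ∩ t v).Nonempty)

/-- A compatible tree representation: a tree representation all of whose
subtrees are pairwise compatible. -/
def IsCompatibleTreeRep {α : Type*} (G : SimpleGraph α) (T : HostTree)
    (t : α → Set T.V) : Prop :=
  IsTreeRep G T t ∧ ∀ u v : α, T.CompatiblePair (t u) (t v)

/-- A strong elimination order. -/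
def IsStrongElimOrder {α : Type*} (G : SimpleGraph α) {n : ℕ} (σ : Fin n ≃ α) : Prop :=
  ∀ i j k l : Fin n, i < j → k < l →
    σ k ∈ closedNbhd G (σ i) → σ l ∈ closedNbhd G (σ i) →
    σ k ∈ closedNbhd G (σ j) → σ l ∈ closedNbhd G (σ j)


open SimpleGraph

namespace SEOaux

variable {m : ℕ}

/-- candidate set -/
noncomputable def cand (r : Fin (m+1) → Fin (m+1) → Prop) (i : Fin (m+1)) :
    Finset (Fin (m+1)) :=
  letI := Classical.dec
  Finset.univ.filter (fun k => i < k ∧ (r i k ∨ k = Fin.last m))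

noncomputable def par (r : Fin (m+1) → Fin (m+1) → Prop) (i : Fin (m+1)) : Fin (m+1) :=
  if h : (cand r i).Nonempty then (cand r i).min' h else i

variable {r : Fin (m+1) → Fin (m+1) → Prop}

lemma mem_cand {i k : Fin (m+1)} :
    k ∈ cand r i ↔ i < k ∧ (r i k ∨ k = Fin.last m) := by
  classical
  simp [cand]

lemma lt_last {i : Fin (m+1)} (h : i ≠ Fin.last m) : i < Fin.last m := by
  have h1 : i.val ≤ m := Nat.lt_succ_iff.mp i.isLt
  have h2 : i.val ≠ m := fun hh => h (Fin.ext (by simp [hh]))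
  exact Fin.lt_def.mpr (by simpa using lt_of_le_of_ne h1 h2)

lemma cand_nonempty {i : Fin (m+1)} (h : i ≠ Fin.last m) : (cand r i).Nonempty :=
  ⟨Fin.last m, mem_cand.mpr ⟨lt_last h, Or.inr rfl⟩⟩

lemma par_gt {i : Fin (m+1)} (h : i ≠ Fin.last m) : i < par r i := by
  rw [par, dif_pos (cand_nonempty h)]
  exact (mem_cand.mp ((cand r i).min'_mem (cand_nonempty h))).1

lemma par_ge (i : Fin (m+1)) : i ≤ par r i := by
  by_cases h : i = Fin.last m
  · rw [par]; split <;> [exact le_of_lt (by exact (mem_cand.mp (Finset.min'_mem _ _)).1); exact le_rfl]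
  · exact le_of_lt (par_gt h)

lemma par_mem {i : Fin (m+1)} (h : i ≠ Fin.last m) :
    r i (par r i) ∨ par r i = Fin.last m := by
  rw [par, dif_pos (cand_nonempty h)]
  exact (mem_cand.mp ((cand r i).min'_mem (cand_nonempty h))).2

lemma par_min {i k : Fin (m+1)} (h1 : i < k) (h2 : r i k ∨ k = Fin.last m) :
    par r i ≤ k := by
  have hne : i ≠ Fin.last m := by
    intro hh; subst hh; exact absurd h1 (not_lt.mpr (Fin.le_last k))
  rw [par, dif_pos (cand_nonempty hne)]
  exact Finset.min'_le _ _ (mem_cand.mpr ⟨h1, h2⟩)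

/-- the host graph -/
def Gt (r : Fin (m+1) → Fin (m+1) → Prop) : SimpleGraph (Fin (m+1)) where
  Adj i j := i ≠ j ∧ (par r i = j ∨ par r j = i)
  symm := ⟨by rintro i j ⟨h1, h2⟩; exact ⟨h1.symm, h2.symm⟩⟩
  loopless := ⟨by rintro i ⟨h1, _⟩; exact h1 rfl⟩

lemma adj_par {i : Fin (m+1)} (h : i ≠ Fin.last m) : (Gt r).Adj i (par r i) :=
  ⟨ne_of_lt (par_gt h), Or.inl rfl⟩

lemma eq_par_of_adj {x y : Fin (m+1)} (hadj : (Gt r).Adj x y) (hle : x ≤ y) :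
    y = par r x := by
  rcases hadj with ⟨hne, h | h⟩
  · exact h.symm
  · exact absurd (le_antisymm (h ▸ par_ge y) hle) (Ne.symm hne)

end SEOaux

namespace SEOaux

variable {m : ℕ} {r : Fin (m+1) → Fin (m+1) → Prop}

noncomputable def walkUp (r : Fin (m+1) → Fin (m+1) → Prop) (i : Fin (m+1)) :
    (Gt r).Walk i (Fin.last m) :=
  if h : i = Fin.last m then (SimpleGraph.Walk.nil).copy h.symm rfl
  else SimpleGraph.Walk.cons (adj_par h) (walkUp r (par r i))
termination_by m - i.val
decreasing_by
  have h3 : i.val < (par r i).val := par_gt (r := r) h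
  have h2 : (par r i).val ≤ m := Nat.lt_succ_iff.mp (par r i).isLt
  omega

def wt (i j : Fin (m+1)) : ℝ := |(i.val : ℝ) - (j.val : ℝ)|

lemma wt_symm (i j : Fin (m+1)) : wt i j = wt j i := abs_sub_comm _ _

lemma wt_pos {i j : Fin (m+1)} (h : (Gt r).Adj i j) : 0 < wt i j := by
  have hne : i ≠ j := h.1
  have : (i.val : ℝ) ≠ (j.val : ℝ) := by
    exact_mod_cast fun hh => hne (Fin.ext hh)
  exact abs_pos.mpr (sub_ne_zero.mpr this)

lemma walkUp_spec (i : Fin (m+1)) :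
    (walkUp r i).IsPath ∧ (∀ x ∈ (walkUp r i).support, i ≤ x) ∧
      ((walkUp r i).darts.map (fun d => wt d.toProd.1 d.toProd.2)).sum
        = (m : ℝ) - i.val := by
  have key : ∀ k (i : Fin (m+1)), m - i.val ≤ k →
      (walkUp r i).IsPath ∧ (∀ x ∈ (walkUp r i).support, i ≤ x) ∧
      ((walkUp r i).darts.map (fun d => wt d.toProd.1 d.toProd.2)).sum
        = (m : ℝ) - i.val := by
    intro k
    induction k with
    | zero =>
      intro i hi
      have hv : i.val ≤ m := Nat.lt_succ_iff.mp i.isLt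
      have : i = Fin.last m := Fin.ext (by simp; omega)
      rw [walkUp, dif_pos this]
      subst this
      refine ⟨by simp, by simp, by simp⟩
    | succ k ih =>
      intro i hi
      by_cases h : i = Fin.last m
      · rw [walkUp, dif_pos h]
        subst h
        refine ⟨by simp, by simp, by simp⟩
      · have hlt := par_gt (r := r) h
        have hple : (par r i).val ≤ m := Nat.lt_succ_iff.mp (par r i).isLt
        obtain ⟨ih1, ih2, ih3⟩ := ih (par r i) (by omega)
        rw [walkUp, dif_neg h]
        refine ⟨?_, ?_, ?_⟩
        · rw [SimpleGraph.Walk.cons_isPath_iff]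
          exact ⟨ih1, fun hmem => absurd (ih2 i hmem) (not_le.mpr hlt)⟩
        · intro x hx
          rcases (SimpleGraph.Walk.support_cons _ _) ▸ hx with hx
          rcases List.mem_cons.mp hx with h1 | h1
          · exact le_of_eq h1.symm
          · exact le_of_lt (lt_of_lt_of_le hlt (ih2 x h1))
        · simp only [SimpleGraph.Walk.darts_cons, List.map_cons, List.sum_cons, ih3]
          have : wt i (par r i) = ((par r i).val : ℝ) - i.val := by
            rw [wt, abs_sub_comm, abs_of_nonneg]
            have : i.val < (par r i).val := hlt
            simp only [sub_nonneg]
            exact_mod_cast le_of_lt this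
          rw [this]
          have hv : i.val < (par r i).val := hlt
          have : ((par r i).val :ℝ) ≤ (m:ℝ) := by exact_mod_cast hple
          push_cast
          ring
  exact key (m - i.val) i le_rfl

lemma gt_connected : (Gt r).Connected := by
  have hreach : ∀ i : Fin (m+1), (Gt r).Reachable i (Fin.last m) :=
    fun i => (walkUp r i).reachable
  exact SimpleGraph.Connected.mk (fun i j => (hreach i).trans (hreach j).symm)

lemma gt_acyclic : (Gt r).IsAcyclic := by
  intro v c0 hc0
  -- pass to minimum vertex of the support
  classical
  have hne : c0.support.toFinset.Nonempty :=
    ⟨v, by simp [SimpleGraph.Walk.start_mem_support]⟩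
  set mv := c0.support.toFinset.min' hne with hmv
  have hmvmem : mv ∈ c0.support := by
    have := c0.support.toFinset.min'_mem hne
    simpa using this
  have hmin : ∀ x ∈ c0.support, mv ≤ x := by
    intro x hx
    exact c0.support.toFinset.min'_le x (by simpa using hx)
  set c := c0.rotate mv hmvmem with hc
  have hcyc : c.IsCycle := hc0.rotate hmvmem
  have hminc : ∀ x ∈ c.support, mv ≤ x := by
    intro x hx
    apply hmin
    have hrot := SimpleGraph.Walk.support_rotate c0 mv hmvmem
    rcases List.mem_cons.mp ((SimpleGraph.Walk.support_eq_cons c) ▸ hx) with h1 | h1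
    · exact h1 ▸ hmvmem
    · have : x ∈ c0.support.tail := (hrot.mem_iff).mp h1
      exact List.mem_of_mem_tail this
  clear_value c
  -- now c is a cycle through the minimal vertex mv
  cases c with
  | nil => exact hcyc.not_of_nil
  | @cons _ u _ hadj p =>
    -- u = par r mv
    have hu : u = par r mv := by
      apply eq_par_of_adj hadj
      apply hminc
      rw [SimpleGraph.Walk.support_cons]
      exact List.mem_cons_of_mem _ p.start_mem_support
    have hppath : p.IsPath := by
      have hnodup : p.support.Nodup := by
        have := hcyc.2
        simpa [SimpleGraph.Walk.support_cons] using this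
      exact SimpleGraph.Walk.IsPath.mk' hnodup
    -- look at the reverse of p : Walk u mv
    have hrev := hppath.reverse
    cases hq : p.reverse with
    | nil => exact hadj.1 rfl
    | @cons _ y _ hadj2 q =>
      -- y = par r mv = u
      have hy : y = par r mv := by
        apply eq_par_of_adj hadj2
        apply hminc
        have : y ∈ p.reverse.support := by
          rw [hq, SimpleGraph.Walk.support_cons]
          exact List.mem_cons_of_mem _ q.start_mem_support
        rw [SimpleGraph.Walk.support_reverse] at this
        simp only [SimpleGraph.Walk.support_cons]
        exact List.mem_cons_of_mem _ (List.mem_reverse.mp this)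
      -- q : Walk y u is a path from par r mv to par r mv, hence nil
      have hqpath : q.IsPath := by
        have : (SimpleGraph.Walk.cons hadj2 q).IsPath := hq ▸ hrev
        exact (SimpleGraph.Walk.cons_isPath_iff _ _).mp this |>.1
      have hyu : y = u := hy.trans hu.symm
      subst hyu
      have hq0 : q.length = 0 := by
        by_contra hq0
        have : q.support.Nodup := hqpath.2
        cases hq2 : q with
        | nil => rw [hq2] at hq0; simp at hq0
        | cons ha q' =>
          -- q : Walk y y nontrivial path: impossible since support starts and ends with y
          have : ¬ (SimpleGraph.Walk.cons ha q').IsPath := by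
            intro hp2
            have h1 := (SimpleGraph.Walk.cons_isPath_iff _ _).mp hp2
            exact h1.2 (SimpleGraph.Walk.end_mem_support q')
          exact this (hq2 ▸ hqpath)
      -- then p has length 1, so c has length 2 < 3
      have h1 : p.length = q.length + 1 := by
        simpa using congrArg SimpleGraph.Walk.length hq
      have h3 := hcyc.three_le_length
      rw [SimpleGraph.Walk.length_cons] at h3
      omega

def GtTree : (Gt r).IsTree := ⟨gt_connected, gt_acyclic⟩

end SEOaux
namespace SEOaux

variable {m : ℕ} {r : Fin (m+1) → Fin (m+1) → Prop}

/-- The host tree. -/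
noncomputable def Th (r : Fin (m+1) → Fin (m+1) → Prop) : HostTree where
  V := Fin (m+1)
  G := Gt r
  isTree := GtTree
  root := Fin.last m
  w := wt
  w_symm := wt_symm
  w_pos := fun _ _ h => wt_pos h

lemma th_depth (x : Fin (m+1)) : (Th r).depth x = (m : ℝ) - x.val := by
  have hex := (Th r).isTree.existsUnique_path (Th r).root x
  have hspec : ((Th r).rootPath x).IsPath := hex.choose_spec.1
  obtain ⟨hpath, _, hsum⟩ := walkUp_spec (r := r) x
  have hrev : ((walkUp r x).reverse : (Th r).G.Walk (Th r).root x).IsPath :=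
    hpath.reverse
  have heq : (Th r).rootPath x = (walkUp r x).reverse :=
    hex.unique hspec hrev
  unfold HostTree.depth
  erw [heq, SimpleGraph.Walk.darts_reverse, List.map_reverse,
    List.sum_reverse, List.map_map]
  rw [← hsum]
  congr 1
  apply List.map_congr_left
  intro d _
  simp only [Function.comp_apply, SimpleGraph.Dart.symm_toProd, Prod.fst_swap, Prod.snd_swap]
  exact wt_symm _ _

/-- The subtree attached to index j. -/
def tS (r : Fin (m+1) → Fin (m+1) → Prop) (j : Fin (m+1)) : Set (Fin (m+1)) :=
  {i | i ≤ j ∧ r i j}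

section SEO

variable (hrefl : ∀ i, r i i)
variable (hseo : ∀ i j k l : Fin (m+1), i < j → k < l → r i k → r i l → r j k → r j l)

include hrefl hseo in
lemma chain {i j : Fin (m+1)} (h1 : i < j) (h2 : r i j) :
    par r i ≤ j ∧ r (par r i) j := by
  have hne : i ≠ Fin.last m := by
    intro hh; subst hh; exact absurd h1 (not_lt.mpr (Fin.le_last j))
  have hle : par r i ≤ j := par_min h1 (Or.inl h2)
  refine ⟨hle, ?_⟩
  rcases eq_or_lt_of_le hle with heq | hlt
  · exact heq ▸ hrefl j
  · rcases par_mem (r := r) hne with hp | hp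
    · exact hseo i (par r i) (par r i) j (par_gt hne) hlt hp h2 (hrefl _)
    · exfalso
      exact absurd (hp ▸ hlt) (not_lt.mpr (Fin.le_last j))

include hrefl hseo in
lemma tS_connected (j : Fin (m+1)) : ((Gt r).induce (tS r j)).Connected := by
  have hj : j ∈ tS r j := ⟨le_rfl, hrefl j⟩
  have key : ∀ k (i : Fin (m+1)) (hi : i ∈ tS r j), j.val - i.val ≤ k →
      ((Gt r).induce (tS r j)).Reachable ⟨i, hi⟩ ⟨j, hj⟩ := by
    intro k
    induction k with
    | zero =>
      intro i hi hk
      have : i = j := le_antisymm hi.1 (by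
        have := hi.1
        rw [Fin.le_def] at this ⊢
        omega)
      subst this
      rfl
    | succ k ih =>
      intro i hi hk
      rcases eq_or_lt_of_le hi.1 with heq | hlt
      · subst heq; rfl
      · have hch := chain hrefl hseo hlt hi.2
        have hpmem : par r i ∈ tS r j := ⟨hch.1, hch.2⟩
        have hne : i ≠ Fin.last m := by
          intro hh; subst hh; exact absurd hlt (not_lt.mpr (Fin.le_last j))
        have hadj : ((Gt r).induce (tS r j)).Adj ⟨i, hi⟩ ⟨par r i, hpmem⟩ := by
          exact adj_par hne
        have hplt : i.val < (par r i).val := par_gt hne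
        have hjle : (par r i).val ≤ j.val := hch.1
        exact hadj.reachable.trans (ih (par r i) hpmem (by omega))
  have hnon : Nonempty (tS r j) := ⟨⟨j, hj⟩⟩
  exact SimpleGraph.Connected.mk (by
    rintro ⟨x, hx⟩ ⟨y, hy⟩
    exact ((key (j.val - x.val) x hx le_rfl).trans (key (j.val - y.val) y hy le_rfl).symm))

include hseo in
lemma overshadow {k l : Fin (m+1)} (hkl : k ≤ l) :
    (Th (m := m) r).Overshadows (tS r l) (tS r k) := by
  have main : ∀ x : Fin (m+1), x ∈ tS r k \ tS r l →
      ∀ y : Fin (m+1), y ∈ tS r k ∩ tS r l →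
      (Th (m := m) r).depth y < (Th (m := m) r).depth x := by
    rintro x ⟨hxk, hxl⟩ y ⟨hyk, hyl⟩
    rw [th_depth, th_depth]
    have hxy : x < y := by
      rcases lt_trichotomy x y with h | h | h
      · exact h
      · exact absurd (h ▸ hyl) hxl
      · exfalso
        rcases eq_or_lt_of_le hkl with heq | hkl'
        · exact hxl (heq ▸ hxk)
        · exact hxl ⟨le_trans hxk.1 hkl, hseo y x k l h hkl' hyk.2 hyl.2 hxk.2⟩
    have h1 : x.val < y.val := hxy
    have h2 : y.val ≤ m := Nat.lt_succ_iff.mp y.isLt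
    have : (x.val : ℝ) < (y.val : ℝ) := by exact_mod_cast h1
    linarith
  exact main

end SEO

end SEOaux
/-- If `G` has a strong elimination order `v₁,…,vₙ`, then it has a compatible
tree representation whose host tree has exactly the `n` pairwise distinct
subtree roots as nodes, with the root of `T(vⱼ)` at depth `n - j`, and with
`T(vₗ)` overshadowing `T(vₖ)` whenever `k < ℓ`. -/
theorem strongElimOrder_to_compatibleTreeRep {α : Type} [Fintype α]
    (G : SimpleGraph α) {n : ℕ} (hn : 1 ≤ n) (σ : Fin n ≃ α)
    (hσ : IsStrongElimOrder G σ) :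
    ∃ (T : HostTree) (t : α → Set T.V) (rt : α → T.V),
      IsCompatibleTreeRep G T t ∧
      (∀ v : α, T.IsSubtreeRoot (t v) (rt v)) ∧
      Function.Bijective rt ∧
      Fintype.card T.V = n ∧
      (∀ j : Fin n, T.depth (rt (σ j)) = (n : ℝ) - ((j : ℕ) + 1)) ∧
      (∀ k l : Fin n, k < l → T.Overshadows (t (σ l)) (t (σ k))) := by
  obtain ⟨m, rfl⟩ : ∃ m, n = m + 1 := ⟨n - 1, by omega⟩
  set r : Fin (m+1) → Fin (m+1) → Prop :=
    fun i j => σ j ∈ closedNbhd G (σ i) with hr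
  have hr_iff : ∀ i j, r i j ↔ (σ j = σ i ∨ G.Adj (σ i) (σ j)) := by
    intro i j
    simp [hr, closedNbhd]
  have hrefl : ∀ i, r i i := fun i => (hr_iff i i).mpr (Or.inl rfl)
  have hsymm : ∀ i j, r i j → r j i := by
    intro i j h
    rcases (hr_iff i j).mp h with h | h
    · exact (hr_iff j i).mpr (Or.inl h.symm)
    · exact (hr_iff j i).mpr (Or.inr h.symm)
  have hseo : ∀ i j k l : Fin (m+1), i < j → k < l → r i k → r i l → r j k → r j l :=
    fun i j k l h1 h2 h3 h4 h5 => hσ i j k l h1 h2 h3 h4 h5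
  have hr_adj : ∀ a b : Fin (m+1), a ≠ b → (r a b ↔ G.Adj (σ a) (σ b)) := by
    intro a b hab
    constructor
    · intro h
      rcases (hr_iff a b).mp h with h | h
      · exact absurd (σ.injective h) (Ne.symm hab)
      · exact h
    · intro h
      exact (hr_iff a b).mpr (Or.inr h)
  refine ⟨SEOaux.Th r, fun v => SEOaux.tS r (σ.symm v), fun v => σ.symm v,
    ⟨⟨fun v => ⟨⟨σ.symm v, le_rfl, hrefl _⟩, SEOaux.tS_connected hrefl hseo _⟩, ?_⟩, ?_⟩,
    ?_, σ.symm.bijective, Fintype.card_fin (m+1), ?_, ?_⟩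
  · -- adjacency iff intersection
    intro u v huv
    set a := σ.symm u with ha
    set b := σ.symm v with hb
    have hu : u = σ a := (σ.apply_symm_apply u).symm
    have hv : v = σ b := (σ.apply_symm_apply v).symm
    have hab : a ≠ b := fun h => huv (by rw [hu, hv, h])
    have keyfwd : ∀ a b : Fin (m+1), a < b → r a b →
        (SEOaux.tS r a ∩ SEOaux.tS r b).Nonempty := by
      intro a b h1 h2
      exact ⟨a, ⟨le_rfl, hrefl a⟩, ⟨le_of_lt h1, h2⟩⟩
    have keybwd : ∀ a b : Fin (m+1), a < b →
        (SEOaux.tS r a ∩ SEOaux.tS r b).Nonempty → r a b := by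
      rintro a b h1 ⟨i, ⟨hia, ria⟩, ⟨hib, rib⟩⟩
      rcases eq_or_lt_of_le hia with heq | hlt
      · exact heq ▸ rib
      · exact hseo i a i b hlt (lt_of_le_of_lt hia h1) (hrefl i) rib (hsymm i a ria)
    rw [hu, hv]
    simp only [Equiv.symm_apply_apply]
    rcases lt_trichotomy a b with h | h | h
    · rw [← hr_adj a b hab]
      exact ⟨keyfwd a b h, keybwd a b h⟩
    · exact absurd h hab
    · rw [SimpleGraph.adj_comm, ← hr_adj b a (Ne.symm hab)]
      erw [Set.inter_comm]
      exact ⟨keyfwd b a h, keybwd b a h⟩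
  · -- compatible pairs
    intro u v
    rcases le_total (σ.symm u) (σ.symm v) with h | h
    · exact Or.inr (SEOaux.overshadow hseo h)
    · exact Or.inl (SEOaux.overshadow hseo h)
  · -- subtree roots
    intro v
    refine ⟨⟨le_rfl, hrefl _⟩, ?_⟩
    intro y hy
    have h1 : (y : Fin (m+1)).val ≤ (σ.symm v).val := hy.1
    have h2 := SEOaux.th_depth (r := r) (σ.symm v)
    have h3 := SEOaux.th_depth (r := r) y
    rw [h2, h3]
    have : ((y : Fin (m+1)).val : ℝ) ≤ ((σ.symm v).val : ℝ) := by exact_mod_cast h1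
    linarith
  · -- depths
    intro j
    have h2 := SEOaux.th_depth (r := r) (σ.symm (σ j))
    rw [h2]
    simp only [Equiv.symm_apply_apply]
    have hj : (j : ℕ) ≤ m := Nat.lt_succ_iff.mp j.isLt
    push_cast
    ring
  · -- overshadowing along the order
    intro k l hkl
    have := SEOaux.overshadow (r := r) hseo (le_of_lt hkl)
    simpa only [Equiv.symm_apply_apply] using this
end

section
/- Let G be a finite simple graph with at least one vertex that has a compatible tree representation {T(v)}. Then any vertex v that maximizes the depth d(𝐯) of the root of its subtree is a simple vertex of G; in particular, G has a simple vertex. -/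
/-- A simple vertex: the closed neighbourhoods of the vertices of `N[v]` are
linearly ordered by inclusion. -/
def IsSimpleVertex {α : Type*} (G : SimpleGraph α) (v : α) : Prop :=
  ∀ u₁ ∈ closedNbhd G v, ∀ u₂ ∈ closedNbhd G v,
    closedNbhd G u₁ ⊆ closedNbhd G u₂ ∨ closedNbhd G u₂ ⊆ closedNbhd G u₁

attribute [local instance] Classical.propDecidable

open SimpleGraph

namespace HostTree

variable (T : HostTree)

lemma rootPath_isPath (x : T.V) : (T.rootPath x).IsPath :=
  (T.isTree.existsUnique_path T.root x).choose_spec.1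

lemma path_unique {x y : T.V} {p q : T.G.Walk x y} (hp : p.IsPath) (hq : q.IsPath) : p = q :=
  (T.isTree.existsUnique_path x y).unique hp hq

lemma rootPath_eq {x : T.V} (p : T.G.Walk T.root x) (hp : p.IsPath) : p = T.rootPath x :=
  T.path_unique hp (T.rootPath_isPath x)

noncomputable def wsum {a b : T.V} (p : T.G.Walk a b) : ℝ :=
  (p.darts.map (fun d => T.w d.toProd.1 d.toProd.2)).sum

lemma depth_eq_wsum (x : T.V) : T.depth x = T.wsum (T.rootPath x) := rfl

lemma wsum_append {a b c : T.V} (p : T.G.Walk a b) (q : T.G.Walk b c) :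
    T.wsum (p.append q) = T.wsum p + T.wsum q := by
  simp [wsum, Walk.darts_append]

lemma wsum_nonneg {a b : T.V} (p : T.G.Walk a b) : 0 ≤ T.wsum p := by
  apply List.sum_nonneg
  intro x hx
  obtain ⟨d, hd, rfl⟩ := List.mem_map.mp hx
  exact (T.w_pos _ _ d.adj).le

lemma wsum_pos {a b : T.V} (p : T.G.Walk a b) (hab : a ≠ b) : 0 < T.wsum p := by
  cases p with
  | nil => exact absurd rfl hab
  | cons h q =>
    simp only [wsum, Walk.darts_cons, List.map_cons, List.sum_cons]
    exact add_pos_of_pos_of_nonneg (T.w_pos _ _ h) (T.wsum_nonneg q)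

/-- `a` is an ancestor of `b` (lies on the root path of `b`). -/
def Below (a b : T.V) : Prop := a ∈ (T.rootPath b).support

lemma below_refl (a : T.V) : T.Below a a := Walk.end_mem_support _

lemma takeUntil_rootPath {a b : T.V} (h : T.Below a b) :
    (T.rootPath b).takeUntil a h = T.rootPath a :=
  T.path_unique ((T.rootPath_isPath b).takeUntil h) (T.rootPath_isPath a)

lemma depth_eq_add {a b : T.V} (h : T.Below a b) :
    T.depth b = T.depth a + T.wsum ((T.rootPath b).dropUntil a h) := by
  calc T.depth b = T.wsum (T.rootPath b) := rfl
    _ = T.wsum (((T.rootPath b).takeUntil a h).append ((T.rootPath b).dropUntil a h)) := by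
        exact (congrArg (fun p => T.wsum p) (Walk.take_spec (T.rootPath b) h)).symm
    _ = T.wsum ((T.rootPath b).takeUntil a h) + T.wsum ((T.rootPath b).dropUntil a h) :=
        T.wsum_append _ _
    _ = T.depth a + T.wsum ((T.rootPath b).dropUntil a h) := by rw [T.takeUntil_rootPath h]; rfl

lemma depth_le_of_below {a b : T.V} (h : T.Below a b) : T.depth a ≤ T.depth b := by
  rw [T.depth_eq_add h]
  linarith [T.wsum_nonneg ((T.rootPath b).dropUntil a h)]

lemma depth_lt_of_below {a b : T.V} (h : T.Below a b) (hne : a ≠ b) :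
    T.depth a < T.depth b := by
  rw [T.depth_eq_add h]
  linarith [T.wsum_pos ((T.rootPath b).dropUntil a h) hne]

lemma below_antisymm {a b : T.V} (h1 : T.Below a b) (h2 : T.Below b a) : a = b := by
  by_contra hne
  exact absurd (T.depth_lt_of_below h1 hne) (not_lt.2 (T.depth_le_of_below h2))

lemma support_subset_of_below {a b : T.V} (h : T.Below a b) :
    (T.rootPath a).support ⊆ (T.rootPath b).support := by
  intro z hz
  have hz' : z ∈ ((T.rootPath b).takeUntil a h).support := by
    rw [T.takeUntil_rootPath h]; exact hz
  rw [← Walk.take_spec (T.rootPath b) h]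
  exact Walk.subset_support_append_left _ _ hz'

lemma below_trans {a b c : T.V} (h1 : T.Below a b) (h2 : T.Below b c) : T.Below a c :=
  T.support_subset_of_below h2 h1

lemma adj_below {a b : T.V} (hab : T.G.Adj a b) : T.Below a b ∨ T.Below b a := by
  by_cases hb : b ∈ (T.rootPath a).support
  · right; exact hb
  · left
    have h1 : (Walk.cons hab.symm (T.rootPath a).reverse).IsPath :=
      (T.rootPath_isPath a).reverse.cons (by
        rw [Walk.support_reverse, List.mem_reverse]; exact hb)
    have h2 := T.rootPath_eq _ h1.reverse
    show a ∈ (T.rootPath b).support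
    rw [← h2, Walk.support_reverse, List.mem_reverse, Walk.support_cons]
    right
    rw [Walk.support_reverse]
    exact List.mem_reverse.mpr (Walk.end_mem_support _)


lemma takeUntil_cons {x x' y c : T.V} (h : T.G.Adj x x') (q : T.G.Walk x' y)
    (hc : c ∈ q.support) (hxc : x ≠ c) (hc' : c ∈ (Walk.cons h q).support) :
    (Walk.cons h q).takeUntil c hc' = Walk.cons h (q.takeUntil c hc) := by
  simp only [Walk.takeUntil, dif_neg hxc]

lemma takeUntil_mem_or : ∀ {x y : T.V} (P : T.G.Walk x y) (a c : T.V)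
    (ha : a ∈ P.support) (hc : c ∈ P.support),
    a ∈ (P.takeUntil c hc).support ∨ c ∈ (P.takeUntil a ha).support := by
  intro x y P
  induction P with
  | nil =>
    intro a c ha hc
    have ha' := ha
    simp only [Walk.support_nil, List.mem_singleton] at ha'
    subst ha'
    exact Or.inl (Walk.start_mem_support _)
  | @cons x x' y h q ih =>
    intro a c ha hc
    by_cases hax : a = x
    · subst hax; exact Or.inl (Walk.start_mem_support _)
    by_cases hcx : c = x
    · subst hcx; exact Or.inr (Walk.start_mem_support _)
    have ha0 := ha
    rw [Walk.support_cons] at ha0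
    have ha' : a ∈ q.support := (List.mem_cons.mp ha0).resolve_left hax
    have hc0 := hc
    rw [Walk.support_cons] at hc0
    have hc' : c ∈ q.support := (List.mem_cons.mp hc0).resolve_left hcx
    rw [T.takeUntil_cons h q hc' (fun e => hcx e.symm) hc,
        T.takeUntil_cons h q ha' (fun e => hax e.symm) ha]
    rcases ih a c ha' hc' with h1 | h1
    · left; rw [Walk.support_cons]; exact List.mem_cons_of_mem _ h1
    · right; rw [Walk.support_cons]; exact List.mem_cons_of_mem _ h1

lemma ancestor_linear {a c y : T.V} (ha : T.Below a y) (hc : T.Below c y) :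
    T.Below a c ∨ T.Below c a := by
  rcases T.takeUntil_mem_or (T.rootPath y) a c ha hc with h1 | h1
  · left; show a ∈ (T.rootPath c).support
    rw [← T.takeUntil_rootPath hc]; exact h1
  · right; show c ∈ (T.rootPath a).support
    rw [← T.takeUntil_rootPath ha]; exact h1

lemma exists_meet : ∀ {x y : T.V} (P : T.G.Walk x y),
    ∃ m ∈ P.support, T.Below m x ∧ T.Below m y := by
  intro x y P
  induction P with
  | nil => exact ⟨_, Walk.start_mem_support _, T.below_refl _, T.below_refl _⟩
  | @cons x x' y h q ih =>
    obtain ⟨m, hm, hmx', hmy⟩ := ih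
    rcases T.adj_below h with hxx' | hx'x
    · rcases T.ancestor_linear (y := x') hxx' hmx' with hxm | hmx
      · exact ⟨x, Walk.start_mem_support _, T.below_refl x, T.below_trans hxm hmy⟩
      · exact ⟨m, by rw [Walk.support_cons]; exact List.mem_cons_of_mem _ hm, hmx, hmy⟩
    · exact ⟨m, by rw [Walk.support_cons]; exact List.mem_cons_of_mem _ hm,
        T.below_trans hmx' hx'x, hmy⟩

lemma exists_walk_in_subtree {S : Set T.V} (hS : T.IsSubtree S) {x y : T.V}
    (hx : x ∈ S) (hy : y ∈ S) :
    ∃ P : T.G.Walk x y, ∀ z ∈ P.support, z ∈ S := by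
  obtain ⟨W⟩ := hS.2.preconnected ⟨x, hx⟩ ⟨y, hy⟩
  refine ⟨W.map (SimpleGraph.Embedding.induce S).toHom, ?_⟩
  intro z hz
  replace hz : z ∈ (W.map (SimpleGraph.Embedding.induce S).toHom).support := hz
  rw [Walk.support_map] at hz
  obtain ⟨a, _, rfl⟩ := List.mem_map.mp hz
  exact a.2

lemma exists_path_in_subtree {S : Set T.V} (hS : T.IsSubtree S) {x y : T.V}
    (hx : x ∈ S) (hy : y ∈ S) :
    ∃ P : T.G.Walk x y, P.IsPath ∧ ∀ z ∈ P.support, z ∈ S := by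
  obtain ⟨W, hW⟩ := T.exists_walk_in_subtree hS hx hy
  exact ⟨W.bypass, W.bypass_isPath, fun z hz => hW z (W.support_bypass_subset hz)⟩

lemma mem_path_of_between {a b c : T.V} (hab : T.Below a b) (hbc : T.Below b c)
    {P : T.G.Walk a c} (hP : P.IsPath) : b ∈ P.support := by
  have hac : T.Below a c := T.below_trans hab hbc
  have hPd : P = (T.rootPath c).dropUntil a hac :=
    T.path_unique hP ((T.rootPath_isPath c).dropUntil hac)
  have hmem : b ∈ (T.rootPath c).support := hbc
  rw [← Walk.take_spec (T.rootPath c) hac] at hmem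
  rcases (Walk.mem_support_append_iff _ _).mp hmem with hb | hb
  · have hba : T.Below b a := by
      show b ∈ (T.rootPath a).support
      rw [← T.takeUntil_rootPath hac]; exact hb
    have : a = b := T.below_antisymm hab hba
    exact this ▸ Walk.start_mem_support P
  · rw [hPd]; exact hb

lemma subtree_min_unique {S : Set T.V} (hS : T.IsSubtree S) {x y : T.V}
    (hx : x ∈ S) (hy : y ∈ S) (hminx : ∀ z ∈ S, T.depth x ≤ T.depth z)
    (hminy : ∀ z ∈ S, T.depth y ≤ T.depth z) : x = y := by
  obtain ⟨P, hP⟩ := T.exists_walk_in_subtree hS hx hy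
  obtain ⟨m, hm, hmx, hmy⟩ := T.exists_meet P
  have hmS := hP m hm
  have hxm : m = x := by
    by_contra hne
    exact absurd (T.depth_lt_of_below hmx hne) (not_lt.2 (hminx m hmS))
  have hym : m = y := by
    by_contra hne
    exact absurd (T.depth_lt_of_below hmy hne) (not_lt.2 (hminy m hmS))
  rw [← hxm, hym]

lemma below_of_min {S : Set T.V} (hS : T.IsSubtree S) {x₀ y : T.V} (hx : x₀ ∈ S)
    (hmin : ∀ z ∈ S, T.depth x₀ ≤ T.depth z) (hy : y ∈ S) : T.Below x₀ y := by
  obtain ⟨P, hP⟩ := T.exists_walk_in_subtree hS hx hy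
  obtain ⟨m, hm, hmx, hmy⟩ := T.exists_meet P
  have : m = x₀ := by
    by_contra hne
    exact absurd (T.depth_lt_of_below hmx hne) (not_lt.2 (hmin m (hP m hm)))
  exact this ▸ hmy

end HostTree

namespace HostTree

variable (T : HostTree)

lemma claimA {S₁ S₂ : Set T.V} (hS2 : T.IsSubtree S₂) (hcomp : T.CompatiblePair S₁ S₂)
    {p r1 : T.V} (hp : T.IsSubtreeRoot S₂ p) (hr1 : T.IsSubtreeRoot S₁ r1)
    (hdep : T.depth r1 ≤ T.depth p) (hne : (S₁ ∩ S₂).Nonempty) : p ∈ S₁ := by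
  rcases hcomp with h | h
  · by_contra hps
    obtain ⟨y, hy1, hy2⟩ := hne
    exact absurd (h p ⟨hp.1, hps⟩ y ⟨hy2, hy1⟩) (not_lt.2 (hp.2 y hy2))
  · have hr1S2 : r1 ∈ S₂ := by
      by_contra hn
      obtain ⟨y, hy1, hy2⟩ := hne
      exact absurd (h r1 ⟨hr1.1, hn⟩ y ⟨hy1, hy2⟩) (not_lt.2 (hr1.2 y hy1))
    have heq : r1 = p :=
      T.subtree_min_unique hS2 hr1S2 hp.1 (fun z hz => le_trans hdep (hp.2 z hz)) hp.2
    exact heq ▸ hr1.1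

lemma claimB {Sw S₁ S₂ : Set T.V} (hS1 : T.IsSubtree S₁) (hSw : T.IsSubtree Sw)
    {p rw : T.V} (hp1 : p ∈ S₁) (hp2 : p ∈ S₂)
    (hrw : T.IsSubtreeRoot Sw rw) (hdep : T.depth rw ≤ T.depth p)
    (hover : T.Overshadows S₂ S₁) (hne : (Sw ∩ S₁).Nonempty) :
    (Sw ∩ S₂).Nonempty := by
  obtain ⟨y, hyw, hy1⟩ := hne
  obtain ⟨W, hW⟩ := T.exists_walk_in_subtree hS1 hp1 hy1
  obtain ⟨m, hm, hmp, hmy⟩ := T.exists_meet W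
  have hmS1 : m ∈ S₁ := hW m hm
  have hmdep : T.depth m ≤ T.depth p := T.depth_le_of_below hmp
  have hmS2 : m ∈ S₂ := by
    by_contra hn
    exact absurd (hover m ⟨hmS1, hn⟩ p ⟨hp1, hp2⟩) (not_lt.2 hmdep)
  have hrwy : T.Below rw y := T.below_of_min hSw hrw.1 hrw.2 hyw
  rcases T.ancestor_linear (y := y) hmy hrwy with hmrw | hrwm
  · obtain ⟨Q, hQp, hQ⟩ := T.exists_path_in_subtree hS1 hmS1 hy1
    have hrwQ : rw ∈ Q.support := T.mem_path_of_between hmrw hrwy hQp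
    have hrwS1 : rw ∈ S₁ := hQ rw hrwQ
    have hrwS2 : rw ∈ S₂ := by
      by_contra hn
      exact absurd (hover rw ⟨hrwS1, hn⟩ p ⟨hp1, hp2⟩) (not_lt.2 hdep)
    exact ⟨rw, hrw.1, hrwS2⟩
  · obtain ⟨Q, hQp, hQ⟩ := T.exists_path_in_subtree hSw hrw.1 hyw
    have hmQ : m ∈ Q.support := T.mem_path_of_between hrwm hmy hQp
    exact ⟨m, hQ m hmQ, hmS2⟩

end HostTree



/-- In a compatible tree representation of a (nonempty) graph `G`, every vertex
whose subtree root has maximum depth is simple; in particular `G` has a simple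
vertex. -/
theorem compatibleTreeRep_simple_vertex {α : Type} [Fintype α] [Nonempty α]
    (G : SimpleGraph α) (T : HostTree) (t : α → Set T.V)
    (h : IsCompatibleTreeRep G T t)
    (rt : α → T.V) (hrt : ∀ v : α, T.IsSubtreeRoot (t v) (rt v)) :
    (∀ v : α, (∀ u : α, T.depth (rt u) ≤ T.depth (rt v)) → IsSimpleVertex G v) ∧
    (∃ v : α, IsSimpleVertex G v) := by
  have main : ∀ v : α, (∀ u : α, T.depth (rt u) ≤ T.depth (rt v)) → IsSimpleVertex G v := by
    intro v hmax u₁ hu₁ u₂ hu₂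
    have hmem : ∀ u : α, u ∈ closedNbhd G v → rt v ∈ t u := by
      intro u hu
      rcases Set.mem_insert_iff.mp hu with rfl | hadj
      · exact (hrt u).1
      · have hadj' : G.Adj v u := hadj
        have hne : u ≠ v := hadj'.ne'
        have hint : (t u ∩ t v).Nonempty := (h.1.2 u v hne).mp hadj'.symm
        exact T.claimA (h.1.1 v) (h.2 u v) (hrt v) (hrt u) (hmax u) hint
    have incl : ∀ a b : α, a ∈ closedNbhd G v → b ∈ closedNbhd G v →
        T.Overshadows (t b) (t a) → closedNbhd G a ⊆ closedNbhd G b := by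
      intro a b ha hb hover w hw
      by_cases hwb : w = b
      · exact hwb ▸ Set.mem_insert _ _
      have hwa : (t w ∩ t a).Nonempty := by
        rcases Set.mem_insert_iff.mp hw with rfl | hadj
        · exact ⟨rt v, hmem w ha, hmem w ha⟩
        · have hadj' : G.Adj a w := hadj
          exact (h.1.2 w a hadj'.ne').mp hadj'.symm
      have hwb' : (t w ∩ t b).Nonempty :=
        T.claimB (h.1.1 a) (h.1.1 w) (hmem a ha) (hmem b hb) (hrt w) (hmax w) hover hwa
      have hadjbw : G.Adj b w := (h.1.2 b w (Ne.symm hwb)).mpr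
        ⟨hwb'.choose, hwb'.choose_spec.2, hwb'.choose_spec.1⟩
      exact Set.mem_insert_iff.mpr (Or.inr hadjbw)
    rcases h.2 u₁ u₂ with hov | hov
    · exact Or.inr (incl u₂ u₁ hu₂ hu₁ hov)
    · exact Or.inl (incl u₁ u₂ hu₁ hu₂ hov)
  refine ⟨main, ?_⟩
  obtain ⟨v, hv⟩ := Finite.exists_max (fun u => T.depth (rt u))
  exact ⟨v, main v hv⟩
end

section
/- Let {T(v)} be a tree representation of a finite simple graph G, and let v,w be vertices with v ∈ N[w]. Then the root 𝐯 of T(v) belongs to T(w) if and only if d(𝐯) ≥ d(𝐰). -/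
open SimpleGraph Walk

noncomputable def wt (T : HostTree) {x y : T.V} (p : T.G.Walk x y) : ℝ :=
  (p.darts.map (fun d => T.w d.toProd.1 d.toProd.2)).sum

lemma wt_nil (T : HostTree) (x : T.V) : wt T (Walk.nil' x) = 0 := rfl

lemma wt_append (T : HostTree) {x y z : T.V} (p : T.G.Walk x y) (q : T.G.Walk y z) :
    wt T (p.append q) = wt T p + wt T q := by
  simp [wt, darts_append]

lemma wt_reverse (T : HostTree) {x y : T.V} (p : T.G.Walk x y) :
    wt T p.reverse = wt T p := by
  simp only [wt, darts_reverse, List.map_reverse, List.sum_reverse, List.map_map]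
  congr 1
  apply List.map_congr_left
  intro d _
  exact (T.w_symm d.toProd.1 d.toProd.2).symm

lemma wt_nonneg (T : HostTree) {x y : T.V} (p : T.G.Walk x y) : 0 ≤ wt T p := by
  induction p with
  | nil => simp [wt]
  | cons h p ih =>
      simp only [wt, darts_cons, List.map_cons, List.sum_cons] at *
      exact add_nonneg (le_of_lt (T.w_pos _ _ h)) ih

lemma wt_pos (T : HostTree) {x y : T.V} (p : T.G.Walk x y) (hxy : x ≠ y) : 0 < wt T p := by
  cases p with
  | nil => exact absurd rfl hxy
  | cons h q =>
      simp only [wt, darts_cons, List.map_cons, List.sum_cons]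
      exact add_pos_of_pos_of_nonneg (T.w_pos _ _ h) (wt_nonneg T q)

lemma rootPath_isPath (T : HostTree) (x : T.V) : (T.rootPath x).IsPath :=
  (T.isTree.existsUnique_path T.root x).choose_spec.1

lemma rootPath_unique (T : HostTree) {x : T.V} (p : T.G.Walk T.root x) (hp : p.IsPath) :
    p = T.rootPath x :=
  ((T.isTree.existsUnique_path T.root x).choose_spec.2 p hp).trans rfl |>.symm ▸
    ((T.isTree.existsUnique_path T.root x).choose_spec.2 p hp)

lemma depth_eq_wt (T : HostTree) {x : T.V} (p : T.G.Walk T.root x) (hp : p.IsPath) :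
    T.depth x = wt T p := by
  rw [rootPath_unique T p hp]; rfl

lemma append_isPath (T : HostTree) {x y z : T.V} {p : T.G.Walk x y} {q : T.G.Walk y z}
    (hp : p.IsPath) (hq : q.IsPath)
    (hmeet : ∀ u, u ∈ p.support → u ∈ q.support → u = y) :
    (p.append q).IsPath := by
  have hqn := (isPath_def q).mp hq
  rw [isPath_def, support_append]
  refine List.Nodup.append ((isPath_def p).mp hp) hqn.tail ?_
  intro u hup huq
  have : u = y := hmeet u hup (List.mem_of_mem_tail huq)
  subst this
  have : u :: q.support.tail = q.support := (support_eq_cons q).symm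
  rw [← this] at hqn
  exact hqn.notMem huq

lemma depth_le_of_mem (T : HostTree) {x y : T.V} (p : T.G.Walk T.root x) (hp : p.IsPath)
    (hy : y ∈ p.support) : T.depth y ≤ T.depth x ∧ (y ≠ x → T.depth y < T.depth x) := by
  classical
  have htake : (p.takeUntil y hy).IsPath := hp.takeUntil hy
  have hdy : T.depth y = wt T (p.takeUntil y hy) := depth_eq_wt T _ htake
  have hdx : T.depth x = wt T p := depth_eq_wt T p hp
  have hsplit : wt T p = wt T (p.takeUntil y hy) + wt T (p.dropUntil y hy) := by
    conv_lhs => rw [← p.take_spec hy]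
    exact wt_append T _ _
  constructor
  · rw [hdy, hdx, hsplit]
    linarith [wt_nonneg T (p.dropUntil y hy)]
  · intro hne
    rw [hdy, hdx, hsplit]
    linarith [wt_pos T (p.dropUntil y hy) hne]


/-- first meeting point of a walk `Q` with a set `B` that contains its endpoint. -/
lemma first_meet (T : HostTree) {a x : T.V} (Q : T.G.Walk a x) (B : Set T.V)
    (hx : x ∈ B) :
    ∃ (z : T.V) (q : T.G.Walk a z) (r : T.G.Walk z x),
      Q = q.append r ∧ z ∈ B ∧ ∀ y ∈ q.support, y ∈ B → y = z := by
  revert hx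
  induction Q with
  | nil => exact fun hx => ⟨_, Walk.nil, Walk.nil, rfl, hx, by simp⟩
  | @cons a b c h Q ih =>
      intro hx
      by_cases ha : a ∈ B
      · exact ⟨a, Walk.nil, Walk.cons h Q, rfl, ha, by simp⟩
      · obtain ⟨z, q, r, hQ, hzB, hfirst⟩ := ih hx
        refine ⟨z, Walk.cons h q, r, by rw [hQ, Walk.cons_append], hzB, ?_⟩
        intro y hy hyB
        rw [Walk.support_cons, List.mem_cons] at hy
        rcases hy with h1 | h1
        · exact absurd (h1 ▸ hyB) ha
        · exact hfirst y h1 hyB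

/-- in a connected induced subgraph there is a path between any two members
whose support stays inside the set. -/
lemma subtree_walk (T : HostTree) {S : Set T.V} (hconn : (T.G.induce S).Connected)
    {x y : T.V} (hx : x ∈ S) (hy : y ∈ S) :
    ∃ p : T.G.Walk x y, p.IsPath ∧ ∀ z ∈ p.support, z ∈ S := by
  classical
  obtain ⟨q⟩ := hconn.preconnected ⟨x, hx⟩ ⟨y, hy⟩
  let f : T.G.induce S →g T.G := (SimpleGraph.Embedding.induce S).toHom
  have hq : ∀ z ∈ (q.map f).support, z ∈ S := by
    intro z hz
    rw [Walk.support_map] at hz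
    obtain ⟨⟨z', hz'⟩, _, rfl⟩ := List.mem_map.mp hz
    exact hz'
  exact ⟨(q.map f).bypass, Walk.bypass_isPath _,
    fun z hz => hq z (Walk.support_bypass_subset _ hz)⟩

/-- The root of a subtree lies on the root path of every node of the subtree. -/
lemma root_mem_rootPath (T : HostTree) {S : Set T.V} (hconn : (T.G.induce S).Connected)
    {r x : T.V} (hrS : r ∈ S) (hmin : ∀ y ∈ S, T.depth r ≤ T.depth y) (hx : x ∈ S) :
    r ∈ (T.rootPath x).support := by
  classical
  obtain ⟨Q, hQpath, hQsup⟩ := subtree_walk T hconn hrS hx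
  set B := T.rootPath x with hB
  obtain ⟨z, q, s, hQ, hzB, hfirst⟩ :=
    first_meet T Q {y | y ∈ B.support} (by simp)
  have hq_path : q.IsPath := by
    have : (q.append s).IsPath := hQ ▸ hQpath
    exact this.of_append_left
  have hq_sup : ∀ y ∈ q.support, y ∈ S := by
    intro y hyq
    exact hQsup y (by rw [hQ, Walk.mem_support_append_iff]; exact Or.inl hyq)
  -- build a path from the tree root to r through z
  have hBpath := rootPath_isPath T x
  have htake : (B.takeUntil z hzB).IsPath := hBpath.takeUntil hzB
  have hP : ((B.takeUntil z hzB).append q.reverse).IsPath := by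
    apply append_isPath T htake (isPath_reverse_iff q |>.mpr hq_path)
    intro u hu1 hu2
    rw [Walk.support_reverse, List.mem_reverse] at hu2
    exact hfirst u hu2 (Walk.support_takeUntil_subset B hzB hu1)
  have hdr : T.depth r = T.depth z + wt T q := by
    have := depth_eq_wt T _ hP
    rw [wt_append, wt_reverse] at this
    rw [this, depth_eq_wt T _ htake]
  have hzS : z ∈ S := hq_sup z (Walk.end_mem_support q)
  have hle := hmin z hzS
  have : r = z := by
    by_contra hne
    have := wt_pos T q hne
    linarith
  rw [this]
  exact hzB

/-- In a tree representation, for `v ∈ N[w]`, the root of `T(v)` belongs to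
`T(w)` iff its depth is at least the depth of the root of `T(w)`. -/
theorem root_mem_iff_depth_ge {α : Type} [Fintype α] (G : SimpleGraph α)
    (T : HostTree) (t : α → Set T.V) (h : IsTreeRep G T t)
    (rt : α → T.V) (hrt : ∀ u : α, T.IsSubtreeRoot (t u) (rt u))
    (v w : α) (hvw : v ∈ closedNbhd G w) :
    rt v ∈ t w ↔ T.depth (rt w) ≤ T.depth (rt v) := by
  classical
  constructor
  · intro hmem
    exact (hrt w).2 (rt v) hmem
  · intro hd
    by_cases hvw' : v = w
    · subst hvw'
      exact (hrt v).1
    · have hadj : G.Adj w v := by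
        rcases Set.mem_insert_iff.mp hvw with h1 | h1
        · exact absurd h1 hvw'
        · exact h1
      obtain ⟨x, hxw, hxv⟩ := (h.2 w v (Ne.symm hvw')).mp hadj
      have hconn_v := (h.1 v).2
      have hconn_w := (h.1 w).2
      have hrv := root_mem_rootPath T hconn_v (hrt v).1 (hrt v).2 hxv
      have hrw := root_mem_rootPath T hconn_w (hrt w).1 (hrt w).2 hxw
      set B := T.rootPath x with hB
      have hBpath := rootPath_isPath T x
      obtain ⟨Q, hQp, hQs⟩ := subtree_walk T hconn_w (hrt w).1 hxw
      have hdrop : B.dropUntil (rt w) hrw = Q :=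
        ((T.isTree.existsUnique_path (rt w) x).unique (hBpath.dropUntil hrw) hQp)
      have hmem : rt v ∈ (B.takeUntil (rt w) hrw).support ∨
          rt v ∈ (B.dropUntil (rt w) hrw).support := by
        rw [← Walk.mem_support_append_iff, B.take_spec hrw]
        exact hrv
      rcases hmem with h1 | h1
      · by_cases heq : rt v = rt w
        · rw [heq]; exact (hrt w).1
        · have := (depth_le_of_mem T _ (hBpath.takeUntil hrw) h1).2 heq
          linarith
      · rw [hdrop] at h1
        exact hQs _ h1
end

section
/- Let T₁,…,T_k (k ≥ 2) be subtrees of a host tree, and set T₀ = T_k. If for every i = 0,…,k−1 the subtree T_i does not overshadow T_{i+1}, then the subtrees are not pairwise compatible: there exist indices i ≠ j such that neither T_i overshadows T_j nor T_j overshadows T_i. -/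
/-- Abstract key lemma: given any "depth" function `d` on a type `V`, a cyclic
family of finite sets such that each `g ((i+1) % k)` overshadows `g i` but
`g i` does not overshadow `g ((i+1) % k)` is impossible.  Proved by induction
on the cardinality of `g 0`: the minimum depth value is constant around the
cycle, the sets of minimizers coincide, and removing the common minimizer set
yields a smaller counterexample. -/
lemma cycle_aux {V : Type} (d : V → ℝ) (k : ℕ) (hk : 2 ≤ k) :
    ∀ n : ℕ, ∀ g : ℕ → Set V, (∀ i, (g i).Finite) → (g 0).ncard ≤ n →
    (∀ i < k, ∀ x ∈ g i \ g ((i + 1) % k), ∀ y ∈ g i ∩ g ((i + 1) % k), d y < d x) →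
    (∀ i < k, ∃ x ∈ g ((i + 1) % k) \ g i, ∃ y ∈ g ((i + 1) % k) ∩ g i, d x ≤ d y) →
    False := by
  have hk0 : 0 < k := by omega
  intro n
  induction n with
  | zero =>
      intro g hfin hcard hOv hnOv
      obtain ⟨x, hx, y, hy, hxy⟩ := hnOv (k - 1) (by omega)
      have hmod : (k - 1 + 1) % k = 0 := by
        have h1 : k - 1 + 1 = k := by omega
        rw [h1, Nat.mod_self]
      rw [hmod] at hy
      have h0 : g 0 = ∅ := (Set.ncard_eq_zero (hfin 0)).mp (Nat.le_zero.mp hcard)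
      rw [h0] at hy
      exact hy.1.elim
  | succ n ih =>
      intro g hfin hcard hOv hnOv
      -- the minimum depth on g (i % k)
      set m : ℕ → ℝ := fun i => sInf (d '' g (i % k)) with hm
      have hne : ∀ i, (g (i % k)).Nonempty := by
        intro i
        obtain ⟨x, hx, y, hy, hxy⟩ := hnOv (i % k) (Nat.mod_lt _ hk0)
        exact ⟨y, hy.2⟩
      have him : ∀ i, (d '' g (i % k)).Nonempty := fun i => (hne i).image d
      have hifin : ∀ i, (d '' g (i % k)).Finite := fun i => ((hfin _).image d)
      have hm_mem : ∀ i, ∃ u ∈ g (i % k), d u = m i := by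
        intro i
        obtain ⟨u, hu, hud⟩ := (him i).csInf_mem (hifin i)
        exact ⟨u, hu, hud⟩
      have hm_le : ∀ i, ∀ v ∈ g (i % k), m i ≤ d v := by
        intro i v hv
        exact csInf_le ((hifin i).bddBelow) ⟨v, hv, rfl⟩
      have hmm : ∀ i, m (i % k) = m i := by
        intro i; simp only [hm, Nat.mod_mod_of_dvd _ dvd_rfl]
      have haddmod : ∀ i : ℕ, (i + 1) % k = (i % k + 1) % k := by
        intro i
        conv_lhs => rw [Nat.add_mod]
        rw [Nat.mod_eq_of_lt (show 1 < k by omega)]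
      -- the minimum is non-increasing around the cycle
      have hstep : ∀ i, m (i + 1) ≤ m i := by
        intro i
        obtain ⟨x, hx, y, hy, hxy⟩ := hnOv (i % k) (Nat.mod_lt _ hk0)
        obtain ⟨u, hu, hud⟩ := hm_mem i
        rw [← haddmod] at hx hy
        by_cases hub : u ∈ g ((i + 1) % k)
        · have := hm_le (i + 1) u hub
          linarith
        · have h1 : d y < d u := hOv (i % k) (Nat.mod_lt _ hk0) u
            ⟨hu, by rw [← haddmod]; exact hub⟩ y ⟨hy.2, by rw [← haddmod]; exact hy.1⟩
          have h2 : m (i + 1) ≤ d x := hm_le (i + 1) x hx.1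
          linarith
      have hanti : ∀ b, ∀ a, a ≤ b → m b ≤ m a := by
        intro b
        induction b with
        | zero => intro a ha; rw [Nat.le_zero.mp ha]
        | succ b ihb =>
            intro a ha
            rcases Nat.lt_or_ge a (b + 1) with h1 | h1
            · exact (hstep b).trans (ihb a (by omega))
            · have hab : a = b + 1 := by omega
              rw [hab]
      have hmk : m k = m 0 := by simp only [hm, Nat.mod_self, Nat.zero_mod]
      have hconst : ∀ i, m i = m 0 := by
        intro i
        rw [← hmm i]
        have h1 : m (i % k) ≤ m 0 := hanti (i % k) 0 (by omega)
        have h3 : m k ≤ m (i % k) := hanti k (i % k) (le_of_lt (Nat.mod_lt _ hk0))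
        linarith [hmk]
      -- the set of minimizers
      set N : ℕ → Set V := fun i => {v | v ∈ g (i % k) ∧ d v = m 0} with hN
      have hNg : ∀ i, N i ⊆ g (i % k) := by
        intro i v hv
        exact hv.1
      have hNiff : ∀ i, ∀ v, v ∈ N i ↔ v ∈ g (i % k) ∧ d v = m 0 := by
        intro i v; simp only [hN, Set.mem_setOf_eq]
      have hNstep : ∀ i, N i ⊆ N (i + 1) := by
        intro i v hv
        obtain ⟨hv1, hv2⟩ := (hNiff i v).mp hv
        obtain ⟨x, hx, y, hy, hxy⟩ := hnOv (i % k) (Nat.mod_lt _ hk0)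
        rw [← haddmod] at hx hy
        by_cases hvb : v ∈ g ((i + 1) % k)
        · exact (hNiff (i + 1) v).mpr ⟨hvb, hv2⟩
        · exfalso
          have h1 : d y < d v := hOv (i % k) (Nat.mod_lt _ hk0) v
            ⟨hv1, by rw [← haddmod]; exact hvb⟩ y ⟨hy.2, by rw [← haddmod]; exact hy.1⟩
          have h2 : m (i + 1) ≤ d x := hm_le (i + 1) x hx.1
          rw [hconst (i + 1)] at h2
          linarith
      have hNmono : ∀ b, ∀ a, a ≤ b → N a ⊆ N b := by
        intro b
        induction b with
        | zero => intro a ha; rw [Nat.le_zero.mp ha]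
        | succ b ihb =>
            intro a ha
            rcases Nat.lt_or_ge a (b + 1) with h1 | h1
            · exact (ihb a (by omega)).trans (hNstep b)
            · have hab : a = b + 1 := by omega
              rw [hab]
      have hNmm : ∀ i, N (i % k) = N i := by
        intro i; simp only [hN, Nat.mod_mod_of_dvd _ dvd_rfl]
      have hNk : N k = N 0 := by simp only [hN, Nat.mod_self, Nat.zero_mod]
      have hNconst : ∀ i, N i = N 0 := by
        intro i
        rw [← hNmm i]
        refine subset_antisymm ?_ (hNmono (i % k) 0 (by omega))
        rw [← hNk]
        exact hNmono k (i % k) (le_of_lt (Nat.mod_lt _ hk0))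
      -- facts about the common minimizer set N 0
      have hWsub : ∀ i, N 0 ⊆ g (i % k) := by
        intro i
        rw [← hNconst i]
        exact hNg i
      have hWc : ∀ v ∈ N 0, d v = m 0 := by
        intro v hv
        exact ((hNiff 0 v).mp hv).2
      have hWmem : ∀ i, ∀ v, v ∈ g (i % k) → d v = m 0 → v ∈ N 0 := by
        intro i v hv hdv
        rw [← hNconst i]
        exact (hNiff i v).mpr ⟨hv, hdv⟩
      have hWlow : ∀ i, ∀ v ∈ g (i % k), m 0 ≤ d v := by
        intro i v hv
        have h := hm_le i v hv
        rw [hconst i] at h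
        exact h
      have hWne : (N 0).Nonempty := by
        obtain ⟨u, hu, hud⟩ := hm_mem 0
        exact ⟨u, hWmem 0 u hu hud⟩
      -- the smaller family
      set g' : ℕ → Set V := fun i => g i \ N 0 with hg'
      have hg'iff : ∀ i, ∀ v, v ∈ g' i ↔ v ∈ g i ∧ v ∉ N 0 := by
        intro i v; simp only [hg', Set.mem_diff]
      have hfin' : ∀ i, (g' i).Finite := fun i => (hfin i).diff
      have hcard' : (g' 0).ncard ≤ n := by
        obtain ⟨w, hw⟩ := hWne
        have hwg : w ∈ g 0 := by
          have h := hWsub 0 hw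
          rwa [Nat.zero_mod] at h
        have hss : g' 0 ⊂ g 0 := by
          constructor
          · intro v hv
            exact ((hg'iff 0 v).mp hv).1
          · intro hsub2
            exact ((hg'iff 0 w).mp (hsub2 hwg)).2 hw
        have := Set.ncard_lt_ncard hss (hfin 0)
        omega
      have hWsub' : ∀ i < k, N 0 ⊆ g i := by
        intro i hi
        have h := hWsub i
        rwa [Nat.mod_eq_of_lt hi] at h
      have hOv' : ∀ i < k, ∀ x ∈ g' i \ g' ((i + 1) % k),
          ∀ y ∈ g' i ∩ g' ((i + 1) % k), d y < d x := by
        intro i hi x hx y hy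
        obtain ⟨hx1, hxW⟩ := (hg'iff i x).mp hx.1
        have hxb : x ∉ g ((i + 1) % k) := by
          intro hxb
          exact hx.2 ((hg'iff _ x).mpr ⟨hxb, hxW⟩)
        exact hOv i hi x ⟨hx1, hxb⟩ y
          ⟨((hg'iff i y).mp hy.1).1, ((hg'iff _ y).mp hy.2).1⟩
      have hnOv' : ∀ i < k, ∃ x ∈ g' ((i + 1) % k) \ g' i,
          ∃ y ∈ g' ((i + 1) % k) ∩ g' i, d x ≤ d y := by
        intro i hi
        obtain ⟨x, hx, y, hy, hxy⟩ := hnOv i hi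
        have hxW : x ∉ N 0 := fun h => hx.2 (hWsub' i hi h)
        have hyW : y ∉ N 0 := by
          intro h
          have hdy : d y = m 0 := hWc y h
          have hlx : m 0 ≤ d x := hWlow (i + 1) x hx.1
          have hdx : d x = m 0 := le_antisymm (by linarith) hlx
          exact hx.2 (hWsub' i hi (hWmem (i + 1) x hx.1 hdx))
        refine ⟨x, ⟨(hg'iff _ x).mpr ⟨hx.1, hxW⟩, fun h => hx.2 ((hg'iff i x).mp h).1⟩,
          y, ⟨(hg'iff _ y).mpr ⟨hy.1, hyW⟩, (hg'iff i y).mpr ⟨hy.2, hyW⟩⟩, hxy⟩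
      exact ih g' hfin' hcard' hOv' hnOv'

/-- If subtrees `T₀,…,T_{k-1}` (k ≥ 2) form a cycle of non-overshadowing
(`T_i` does not overshadow `T_{(i+1) mod k}` for each `i`), then some two of
them are incompatible. -/
theorem not_overshadow_cycle_not_compatible (T : HostTree) (k : ℕ) (hk : 2 ≤ k)
    (f : ℕ → Set T.V) (hsub : ∀ i < k, T.IsSubtree (f i))
    (hno : ∀ i < k, ¬ T.Overshadows (f i) (f ((i + 1) % k))) :
    ∃ i < k, ∃ j < k, i ≠ j ∧
      ¬ T.Overshadows (f i) (f j) ∧ ¬ T.Overshadows (f j) (f i) := by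
  by_contra hcon
  push_neg at hcon
  have hne : ∀ i < k, i ≠ (i + 1) % k := by
    intro i hi
    rcases Nat.lt_or_ge (i + 1) k with h1 | h1
    · rw [Nat.mod_eq_of_lt h1]; omega
    · have h2 : i + 1 = k := by omega
      rw [h2, Nat.mod_self]; omega
  have hOv : ∀ i < k, T.Overshadows (f ((i + 1) % k)) (f i) := by
    intro i hi
    exact hcon i hi ((i + 1) % k) (Nat.mod_lt _ (by omega)) (hne i hi) (hno i hi)
  have hnOv : ∀ i < k, ∃ x ∈ f ((i + 1) % k) \ f i,
      ∃ y ∈ f ((i + 1) % k) ∩ f i, T.depth x ≤ T.depth y := by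
    intro i hi
    have := hno i hi
    simp only [HostTree.Overshadows, not_forall, not_lt] at this
    obtain ⟨x, hx, y, hy, hxy⟩ := this
    exact ⟨x, hx, y, hy, hxy⟩
  exact cycle_aux T.depth k hk (f 0).ncard f (fun i => Set.toFinite _) le_rfl
    (fun i hi => hOv i hi) hnOv
end

section
/- Let {T(v)} be a tree representation of a finite simple graph G. If v and w are adjacent in G and T(v) overshadows T(w), then d(𝐯) ≤ d(𝐰), and in particular the root 𝐰 of T(w) belongs to T(v). -/
/-- In a tree representation, if `v` and `w` are adjacent and `T(v)`
overshadows `T(w)`, then `d(𝐯) ≤ d(𝐰)` and the root of `T(w)` lies in `T(v)`. -/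
theorem overshadow_adj_root_depth_le {α : Type} [Fintype α] (G : SimpleGraph α)
    (T : HostTree) (t : α → Set T.V) (h : IsTreeRep G T t)
    (rt : α → T.V) (hrt : ∀ u : α, T.IsSubtreeRoot (t u) (rt u))
    (v w : α) (hadj : G.Adj v w) (hov : T.Overshadows (t v) (t w)) :
    T.depth (rt v) ≤ T.depth (rt w) ∧ rt w ∈ t v := by
  obtain ⟨z, hzv, hzw⟩ := ((h.2 v w hadj.ne).mp hadj)
  have hwv : rt w ∈ t v := by
    by_contra hnot
    have h1 : T.depth z < T.depth (rt w) :=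
      hov (rt w) ⟨(hrt w).1, hnot⟩ z ⟨hzw, hzv⟩
    exact absurd ((hrt w).2 z hzw) (not_le.mpr h1)
  exact ⟨(hrt v).2 _ hwv, hwv⟩
end

section
/- If a finite simple graph G has a compatible tree representation, then G has a strong elimination order. -/
section Aux

variable {T : HostTree}

/-- Any subtree overshadows itself (vacuously on the empty difference). -/
lemma over_self (T : HostTree) (S : Set T.V) : T.Overshadows S S := by
  intro x hx
  exact absurd hx.2 (not_not_intro hx.1)

/-- Disjoint sets overshadow each other vacuously. -/
lemma over_of_disjoint {S₁ S₂ : Set T.V} (h : ¬ (S₁ ∩ S₂).Nonempty) :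
    T.Overshadows S₁ S₂ := by
  intro x hx y hy
  exact absurd ⟨y, hy.2, hy.1⟩ h

/-- A minimum-depth point of `S₂` belongs to `S₁` whenever `S₁` overshadows `S₂`
and the two sets meet. -/
lemma over_min_mem {S₁ S₂ : Set T.V} (hov : T.Overshadows S₁ S₂)
    (hne : (S₁ ∩ S₂).Nonempty) {x : T.V} (hx : x ∈ S₂)
    (hmin : ∀ y ∈ S₂, T.depth x ≤ T.depth y) : x ∈ S₁ := by
  by_contra hxn
  obtain ⟨q, hq₁, hq₂⟩ := hne
  exact absurd (hov x ⟨hx, hxn⟩ q ⟨hq₂, hq₁⟩) (not_lt.mpr (hmin q hq₂))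

end Aux

section Order

variable {α : Type} [Fintype α] (T : HostTree) (t : α → Set T.V)

-- Key existence lemma: in any nonempty finite family of pairwise compatible
-- subtrees there is one which is overshadowed by all others and whose root is deepest.
lemma exists_first
    (hcomp : ∀ u v : α, T.CompatiblePair (t u) (t v))
    (r : α → T.V) (hrmem : ∀ v, r v ∈ t v)
    (hrmin : ∀ v, ∀ x ∈ t v, T.depth (r v) ≤ T.depth x)
    (s : Finset α) (hs : s.Nonempty) :
    ∃ x ∈ s, ∀ y ∈ s, T.Overshadows (t y) (t x) ∧ T.depth (r y) ≤ T.depth (r x) := by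
  classical
  by_contra hcon
  push_neg at hcon
  -- from failure of being first, produce a successor with ¬Over or strictly larger root depth
  have hsucc : ∀ x ∈ s, ∃ y ∈ s,
      ¬ T.Overshadows (t y) (t x) ∨ T.depth (r x) < T.depth (r y) := by
    intro x hx
    obtain ⟨y, hy, hny⟩ := hcon x hx
    rcases Classical.em (T.Overshadows (t y) (t x)) with hov | hov
    · exact ⟨y, hy, Or.inr (hny hov)⟩
    · exact ⟨y, hy, Or.inl hov⟩
  -- ¬Over(t y, t x) forces the sets to meet, the other overshadow direction,
  -- and d x ≤ d y.
  have hkey : ∀ x y : α, ¬ T.Overshadows (t y) (t x) →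
      (t x ∩ t y).Nonempty ∧ T.Overshadows (t x) (t y) ∧
        T.depth (r x) ≤ T.depth (r y) := by
    intro x y hno
    have hne : (t x ∩ t y).Nonempty := by
      by_contra hemp
      exact hno (over_of_disjoint (fun ⟨z, hz1, hz2⟩ => hemp ⟨z, hz2, hz1⟩))
    have hov : T.Overshadows (t x) (t y) := (hcomp x y).resolve_right hno
    have hmem : r y ∈ t x := over_min_mem hov hne (hrmem y) (hrmin y)
    exact ⟨hne, hov, hrmin x _ hmem⟩
  -- iterate the successor map
  set g : α → α := fun x => if hx : x ∈ s then (hsucc x hx).choose else x with hg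
  have hgspec : ∀ x ∈ s, g x ∈ s ∧
      (¬ T.Overshadows (t (g x)) (t x) ∨ T.depth (r x) < T.depth (r (g x))) := by
    intro x hx
    simp only [hg, dif_pos hx]
    exact ⟨(hsucc x hx).choose_spec.1, (hsucc x hx).choose_spec.2⟩
  set f : ℕ → α := fun n => g^[n] hs.choose with hf
  have hfs : ∀ n, f n ∈ s := by
    intro n
    induction n with
    | zero => exact hs.choose_spec
    | succ m ih =>
        have : f (m + 1) = g (f m) := Function.iterate_succ_apply' g m _
        rw [this]; exact (hgspec _ ih).1
  have hfstep : ∀ n, ¬ T.Overshadows (t (f (n+1))) (t (f n)) ∨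
      T.depth (r (f n)) < T.depth (r (f (n+1))) := by
    intro n
    have : f (n + 1) = g (f n) := Function.iterate_succ_apply' g n _
    rw [this]; exact (hgspec _ (hfs n)).2
  have hdmono : Monotone (fun n => T.depth (r (f n))) := by
    apply monotone_nat_of_le_succ
    intro n
    rcases hfstep n with hno | hlt
    · exact (hkey _ _ hno).2.2
    · exact le_of_lt hlt
  obtain ⟨a, b, hab, hfab⟩ := Finite.exists_ne_map_eq_of_infinite f
  wlog hlt : a < b generalizing a b
  · exact this b a hab.symm hfab.symm (hab.lt_or_gt.resolve_left hlt)
  -- depth is constant on [a, b]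
  have hdeq : ∀ u, a ≤ u → u ≤ b → T.depth (r (f u)) = T.depth (r (f a)) := by
    intro u h1 h2
    have e1 : T.depth (r (f a)) ≤ T.depth (r (f u)) := hdmono h1
    have e2 : T.depth (r (f u)) ≤ T.depth (r (f a)) := by
      have e3 : T.depth (r (f u)) ≤ T.depth (r (f b)) := hdmono h2
      rw [← hfab] at e3
      exact e3
    exact le_antisymm e2 e1
  have hstepC : ∀ u, a ≤ u → u < b → ¬ T.Overshadows (t (f (u+1))) (t (f u)) := by
    intro u h1 h2
    rcases hfstep u with hno | hltd
    · exact hno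
    · exfalso
      have e1 := hdeq u h1 (le_of_lt h2)
      have e2 := hdeq (u+1) (le_trans h1 (Nat.le_succ u)) h2
      rw [e1, e2] at hltd
      exact lt_irrefl _ hltd
  set P : ℕ := b - a with hP
  have hPpos : 0 < P := Nat.sub_pos_of_lt hlt
  set F : ℕ → α := fun n => f (a + n % P) with hF
  have hmod1 : ∀ n : ℕ, n % P % P = n % P := fun n => Nat.mod_mod_of_dvd n dvd_rfl
  have hmod2 : ∀ n : ℕ, (n + 1) % P = (n % P + 1) % P := fun n => (Nat.mod_add_mod n P 1).symm
  have hFmod : ∀ n, F n = F (n % P) := by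
    intro n
    simp only [hF]
    rw [hmod1]
  have hFsuccmod : ∀ n, F (n + 1) = F (n % P + 1) := by
    intro n
    simp only [hF]
    rw [hmod2]
  have hFper : ∀ n, F (n + P) = F n := by
    intro n
    simp only [hF, Nat.add_mod_right]
  have hFstep : ∀ n, ¬ T.Overshadows (t (F (n + 1))) (t (F n)) := by
    intro n
    have hr : n % P < P := Nat.mod_lt n hPpos
    rcases Nat.lt_or_ge (n % P + 1) P with hc | hc
    · have h1 : (n + 1) % P = n % P + 1 := by
        rw [hmod2 n, Nat.mod_eq_of_lt hc]
      have : F (n + 1) = f (a + n % P + 1) := by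
        simp only [hF, h1, Nat.add_assoc]
      rw [this]
      exact hstepC (a + n % P) (Nat.le_add_right a _) (by omega)
    · have hrP : n % P + 1 = P := by omega
      have h1 : (n + 1) % P = 0 := by
        rw [hmod2 n, hrP, Nat.mod_self]
      have hFn1 : F (n + 1) = f a := by
        simp only [hF, h1, Nat.add_zero]
      have hfb : f b = f a := hfab.symm
      have : F (n + 1) = f (a + n % P + 1) := by
        rw [hFn1, ← hfb]
        congr 1
        omega
      rw [this]
      exact hstepC (a + n % P) (Nat.le_add_right a _) (by omega)
  -- witnesses from failure of overshadowing
  have hEX : ∀ n, ∃ p, p ∈ t (F n) ∧ p ∉ t (F (n + 1)) ∧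
      ∃ q, q ∈ t (F n) ∧ q ∈ t (F (n + 1)) ∧ T.depth p ≤ T.depth q := by
    intro n
    have hno := hFstep n
    unfold HostTree.Overshadows at hno
    push_neg at hno
    obtain ⟨p, hp, q, hq, hpq⟩ := hno
    exact ⟨p, hp.1, hp.2, q, hq.1, hq.2, hpq⟩
  set p : ℕ → T.V := fun n => (hEX n).choose with hp
  have hpspec : ∀ n, p n ∈ t (F n) ∧ p n ∉ t (F (n + 1)) ∧
      ∃ q, q ∈ t (F n) ∧ q ∈ t (F (n + 1)) ∧ T.depth (p n) ≤ T.depth q :=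
    fun n => (hEX n).choose_spec
  -- choose-congruence: p depends only on (F n, F (n+1))
  have hchoose : ∀ m n : ℕ, F m = F n → F (m + 1) = F (n + 1) → p m = p n := by
    intro m n h1 h2
    have : (fun z : T.V => z ∈ t (F m) ∧ z ∉ t (F (m + 1)) ∧
        ∃ q, q ∈ t (F m) ∧ q ∈ t (F (m + 1)) ∧ T.depth z ≤ T.depth q) =
        (fun z : T.V => z ∈ t (F n) ∧ z ∉ t (F (n + 1)) ∧
        ∃ q, q ∈ t (F n) ∧ q ∈ t (F (n + 1)) ∧ T.depth z ≤ T.depth q) := by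
      rw [h1, h2]
    simp only [hp]
    congr 1
  have hpmod : ∀ n, p n = p (n % P) := by
    intro n
    refine hchoose n (n % P) (hFmod n) ?_
    rw [hFsuccmod n]
  -- minimizing index
  obtain ⟨n₀, hn₀mem, hn₀min⟩ :=
    Finset.exists_min_image (Finset.range P) (fun n => T.depth (p n)) ⟨0, by simpa using hPpos⟩
  have hminall : ∀ m, T.depth (p n₀) ≤ T.depth (p m) := by
    intro m
    rw [hpmod m]
    exact hn₀min _ (Finset.mem_range.mpr (Nat.mod_lt m hPpos))
  set n : ℕ := n₀ + P with hn
  have hpn : p n = p n₀ := by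
    refine hchoose n n₀ ?_ ?_
    · rw [hn, hFper]
    · rw [hn, show n₀ + P + 1 = n₀ + 1 + P by omega, hFper]
  -- the exit point
  set M : Finset ℕ := (Finset.Icc (n₀ + 1) n).filter (fun u => p n ∉ t (F u)) with hM
  have hMne : (n₀ + 1) ∈ M := by
    rw [hM, Finset.mem_filter, Finset.mem_Icc]
    refine ⟨⟨le_refl _, by omega⟩, ?_⟩
    rw [hpn]
    exact (hpspec n₀).2.1
  set m : ℕ := M.max' ⟨_, hMne⟩ with hm
  have hmM : m ∈ M := Finset.max'_mem _ _
  have hmIcc : n₀ + 1 ≤ m ∧ m ≤ n := by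
    have := (Finset.mem_filter.mp hmM).1
    exact Finset.mem_Icc.mp this
  have hmnot : p n ∉ t (F m) := (Finset.mem_filter.mp hmM).2
  have hmn : m < n := by
    rcases Nat.lt_or_ge m n with h | h
    · exact h
    · exfalso
      have : m = n := by omega
      rw [this] at hmnot
      exact hmnot (hpspec n).1
  have hm1mem : p n ∈ t (F (m + 1)) := by
    by_contra hc
    have : m + 1 ∈ M := by
      rw [hM, Finset.mem_filter, Finset.mem_Icc]
      exact ⟨⟨by omega, by omega⟩, hc⟩
    have := Finset.le_max' M (m + 1) this
    omega
  -- overshadowing in the forward direction at step m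
  have hovm : T.Overshadows (t (F m)) (t (F (m + 1))) :=
    (hcomp (F m) (F (m + 1))).resolve_right (hFstep m)
  obtain ⟨q, hq1, hq2, hqd⟩ := (hpspec m).2.2
  have hlt1 : T.depth q < T.depth (p n) :=
    hovm (p n) ⟨hm1mem, hmnot⟩ q ⟨hq2, hq1⟩
  have := hminall m
  rw [hpn] at hlt1
  linarith
end Order

-- Build an ordering list of any finite set of vertices in which each vertex is
-- overshadowed by all later ones and root depths are non-increasing.
lemma exists_sorted_list {α : Type} [Fintype α] (T : HostTree) (t : α → Set T.V)
    (hcomp : ∀ u v : α, T.CompatiblePair (t u) (t v))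
    (r : α → T.V) (hrmem : ∀ v, r v ∈ t v)
    (hrmin : ∀ v, ∀ x ∈ t v, T.depth (r v) ≤ T.depth x)
    (s : Finset α) : ∃ l : List α, l.Nodup ∧ (∀ a, a ∈ l ↔ a ∈ s) ∧
      l.Pairwise (fun u v => T.Overshadows (t v) (t u) ∧ T.depth (r v) ≤ T.depth (r u)) := by
  classical
  induction s using Finset.strongInduction with
  | _ s ih =>
    rcases s.eq_empty_or_nonempty with rfl | hne
    · exact ⟨[], List.nodup_nil, by simp, List.Pairwise.nil⟩
    · obtain ⟨x, hxs, hx⟩ := exists_first T t hcomp r hrmem hrmin s hne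
      obtain ⟨l, hnd, hmem, hpw⟩ := ih (s.erase x) (Finset.erase_ssubset hxs)
      refine ⟨x :: l, ?_, ?_, ?_⟩
      · exact List.nodup_cons.mpr
          ⟨fun hxl => (Finset.notMem_erase x s) ((hmem x).1 hxl), hnd⟩
      · intro a
        simp only [List.mem_cons, hmem, Finset.mem_erase]
        constructor
        · rintro (rfl | ⟨_, h⟩)
          · exact hxs
          · exact h
        · intro ha
          by_cases hax : a = x
          · exact Or.inl hax
          · exact Or.inr ⟨hax, ha⟩
      · refine List.pairwise_cons.mpr ⟨?_, hpw⟩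
        intro y hy
        exact hx y (Finset.mem_of_mem_erase ((hmem y).1 hy))

/-- A finite simple graph with a compatible tree representation has a strong
elimination order. -/
theorem compatibleTreeRep_to_strongElimOrder {α : Type} [Fintype α]
    (G : SimpleGraph α) (T : HostTree) (t : α → Set T.V)
    (h : IsCompatibleTreeRep G T t) :
    ∃ (n : ℕ) (σ : Fin n ≃ α), IsStrongElimOrder G σ := by
  classical
  obtain ⟨⟨hsub, hadj⟩, hcomp⟩ := h
  have hmin : ∀ v : α, ∃ x, x ∈ t v ∧ ∀ y ∈ t v, T.depth x ≤ T.depth y := by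
    intro v
    obtain ⟨x, hx, hm⟩ := Set.exists_min_image (t v) T.depth (Set.toFinite _) (hsub v).1
    exact ⟨x, hx, hm⟩
  choose r hrmem hrmin using hmin
  obtain ⟨l, hnd, hmem, hpw⟩ := exists_sorted_list T t hcomp r hrmem hrmin Finset.univ
  have hmem' : ∀ a : α, a ∈ l := fun a => (hmem a).2 (Finset.mem_univ a)
  have hinj : Function.Injective l.get := List.nodup_iff_injective_get.mp hnd
  have hsurj : Function.Surjective l.get := by
    intro a
    obtain ⟨i, hi⟩ := List.mem_iff_get.mp (hmem' a)
    exact ⟨i, hi⟩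
  have hR := List.pairwise_iff_get.mp hpw
  -- the closed neighbourhood is precisely nonemptiness of the intersection
  have hNiff : ∀ u w : α, w ∈ closedNbhd G u ↔ (t w ∩ t u).Nonempty := by
    intro u w
    rcases eq_or_ne w u with rfl | hwu
    · simp only [closedNbhd, Set.mem_insert_iff, true_or, Set.inter_self, true_iff]
      exact (hsub w).1
    · have h1 : w ∈ closedNbhd G u ↔ G.Adj u w := by
        simp only [closedNbhd, Set.mem_insert_iff, SimpleGraph.mem_neighborSet, hwu, false_or]
      rw [h1, hadj u w (Ne.symm hwu), Set.inter_comm]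
  refine ⟨l.length, Equiv.ofBijective l.get ⟨hinj, hsurj⟩, ?_⟩
  intro i j k m hij hkl hki hli hkj
  set ai := l.get i with hai
  set aj := l.get j with haj
  set ak := l.get k with hak
  set al := l.get m with hal
  have hKA : (t ak ∩ t ai).Nonempty := (hNiff ai ak).mp hki
  have hLA : (t al ∩ t ai).Nonempty := (hNiff ai al).mp hli
  have hKB : (t ak ∩ t aj).Nonempty := (hNiff aj ak).mp hkj
  have hOBA : T.Overshadows (t aj) (t ai) := (hR i j hij).1
  have hDBA : T.depth (r aj) ≤ T.depth (r ai) := (hR i j hij).2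
  have hOLK : T.Overshadows (t al) (t ak) := (hR k m hkl).1
  have hDLK : T.depth (r al) ≤ T.depth (r ak) := (hR k m hkl).2
  rw [hNiff]
  by_contra hLB
  have hnotB : ∀ z, z ∈ t al → z ∉ t aj := fun z hz hzB => hLB ⟨z, hz, hzB⟩
  have swap : ∀ {X Y : Set T.V}, (X ∩ Y).Nonempty → (Y ∩ X).Nonempty :=
    fun ⟨z, h1, h2⟩ => ⟨z, h2, h1⟩
  rcases hcomp ai al with hoAL | hoLA
  · -- Case I : A overshadows L, so the root of L lies in A.
    have hrLA : r al ∈ t ai := over_min_mem hoAL (swap hLA) (hrmem al) (hrmin al)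
    have hdAL : T.depth (r ai) ≤ T.depth (r al) := hrmin ai _ hrLA
    have hrLnB : r al ∉ t aj := hnotB _ (hrmem al)
    rcases hcomp ai ak with hoAK | hoKA
    · -- I.a : A overshadows K
      have hrKA : r ak ∈ t ai := over_min_mem hoAK (swap hKA) (hrmem ak) (hrmin ak)
      have hdAK : T.depth (r ai) ≤ T.depth (r ak) := hrmin ai _ hrKA
      rcases hcomp aj ak with hoBK | hoKB
      · -- I.a.α : B overshadows K
        have hrKB : r ak ∈ t aj := over_min_mem hoBK (swap hKB) (hrmem ak) (hrmin ak)
        have hlt := hOBA (r al) ⟨hrLA, hrLnB⟩ (r ak) ⟨hrKA, hrKB⟩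
        linarith
      · -- I.a.β : K overshadows B
        have hrBK : r aj ∈ t ak := over_min_mem hoKB hKB (hrmem aj) (hrmin aj)
        have hdKB : T.depth (r ak) ≤ T.depth (r aj) := hrmin ak _ hrBK
        have hKmin : ∀ y ∈ t ak, T.depth (r aj) ≤ T.depth y := by
          intro y hy
          have := hrmin ak y hy
          linarith
        have hrBA : r aj ∈ t ai := over_min_mem hoAK (swap hKA) hrBK hKmin
        have hlt := hOBA (r al) ⟨hrLA, hrLnB⟩ (r aj) ⟨hrBA, hrmem aj⟩
        linarith
    · -- I.b : K overshadows A
      have hrAK : r ai ∈ t ak := over_min_mem hoKA hKA (hrmem ai) (hrmin ai)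
      have hdKA : T.depth (r ak) ≤ T.depth (r ai) := hrmin ak _ hrAK
      have hALmin : ∀ y ∈ t ai, T.depth (r al) ≤ T.depth y := by
        intro y hy
        have := hrmin ai y hy
        linarith
      rcases hcomp aj ak with hoBK | hoKB
      · -- I.b.α : B overshadows K
        have hAKmin : ∀ y ∈ t ak, T.depth (r ai) ≤ T.depth y := by
          intro y hy
          have := hrmin ak y hy
          linarith
        have hrAB : r ai ∈ t aj := over_min_mem hoBK (swap hKB) hrAK hAKmin
        have hlt := hOBA (r al) ⟨hrLA, hrLnB⟩ (r ai) ⟨hrmem ai, hrAB⟩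
        linarith
      · -- I.b.β : K overshadows B
        have hrBK : r aj ∈ t ak := over_min_mem hoKB hKB (hrmem aj) (hrmin aj)
        have hdKB : T.depth (r ak) ≤ T.depth (r aj) := hrmin ak _ hrBK
        have hrBnL : r aj ∉ t al := fun hc => hLB ⟨r aj, hc, hrmem aj⟩
        have hrLK : r al ∈ t ak := over_min_mem hoKA hKA hrLA hALmin
        have hlt := hOLK (r aj) ⟨hrBK, hrBnL⟩ (r al) ⟨hrLK, hrmem al⟩
        linarith
  · -- Case II : L overshadows A, so the root of A lies in L.
    have hrAL : r ai ∈ t al := over_min_mem hoLA hLA (hrmem ai) (hrmin ai)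
    have hdLA : T.depth (r al) ≤ T.depth (r ai) := hrmin al _ hrAL
    have hrAnB : r ai ∉ t aj := hnotB _ hrAL
    rcases hcomp ai ak with hoAK | hoKA
    · -- II.b : A overshadows K
      have hrKA : r ak ∈ t ai := over_min_mem hoAK (swap hKA) (hrmem ak) (hrmin ak)
      have hdAK : T.depth (r ai) ≤ T.depth (r ak) := hrmin ai _ hrKA
      rcases hcomp aj ak with hoBK | hoKB
      · -- II.b.α : B overshadows K
        have hrKB : r ak ∈ t aj := over_min_mem hoBK (swap hKB) (hrmem ak) (hrmin ak)
        have hlt := hOBA (r ai) ⟨hrmem ai, hrAnB⟩ (r ak) ⟨hrKA, hrKB⟩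
        linarith
      · -- II.b.β : K overshadows B
        have hrBK : r aj ∈ t ak := over_min_mem hoKB hKB (hrmem aj) (hrmin aj)
        have hdKB : T.depth (r ak) ≤ T.depth (r aj) := hrmin ak _ hrBK
        have hKmin : ∀ y ∈ t ak, T.depth (r aj) ≤ T.depth y := by
          intro y hy
          have := hrmin ak y hy
          linarith
        have hrBA : r aj ∈ t ai := over_min_mem hoAK (swap hKA) hrBK hKmin
        have hlt := hOBA (r ai) ⟨hrmem ai, hrAnB⟩ (r aj) ⟨hrBA, hrmem aj⟩
        linarith
    · -- II.a : K overshadows A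
      have hrAK : r ai ∈ t ak := over_min_mem hoKA hKA (hrmem ai) (hrmin ai)
      have hdKA : T.depth (r ak) ≤ T.depth (r ai) := hrmin ak _ hrAK
      rcases hcomp aj ak with hoBK | hoKB
      · -- II.a.α : B overshadows K
        have hrKB : r ak ∈ t aj := over_min_mem hoBK (swap hKB) (hrmem ak) (hrmin ak)
        have hrKnL : r ak ∉ t al := fun hc => hLB ⟨r ak, hc, hrKB⟩
        have hlt := hOLK (r ak) ⟨hrmem ak, hrKnL⟩ (r ai) ⟨hrAK, hrAL⟩
        linarith
      · -- II.a.β : K overshadows B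
        have hrBK : r aj ∈ t ak := over_min_mem hoKB hKB (hrmem aj) (hrmin aj)
        have hrBnL : r aj ∉ t al := fun hc => hLB ⟨r aj, hc, hrmem aj⟩
        have hlt := hOLK (r aj) ⟨hrBK, hrBnL⟩ (r ai) ⟨hrAK, hrAL⟩
        linarith
end

section
/- Let {T(v)} be a compatible tree representation of a finite simple graph G in which the roots 𝐮, 𝐯 of the subtrees of any two distinct vertices u, v are distinct nodes of the host tree. Then every enumeration v₁,…,vₙ of the vertices with d(𝐯₁) ≥ d(𝐯₂) ≥ … ≥ d(𝐯ₙ) is a strong elimination order of G. -/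
/- ====================  Auxiliary development  ==================== -/

section ListFacts

lemma sublist_sum_le' {β : Type*} (f : β → ℝ) {l₁ l₂ : List β} (h : l₁.Sublist l₂)
    (h0 : ∀ x ∈ l₂, 0 ≤ f x) : (l₁.map f).sum ≤ (l₂.map f).sum := by
  induction h with
  | slnil => simp
  | cons a h ih =>
      simp only [List.map_cons, List.sum_cons]
      have := ih (fun x hx => h0 x (List.mem_cons_of_mem _ hx))
      have ha := h0 a (List.mem_cons_self)
      linarith
  | cons_cons a h ih =>
      simp only [List.map_cons, List.sum_cons]
      have := ih (fun x hx => h0 x (List.mem_cons_of_mem _ hx))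
      linarith

lemma sublist_eq_of_sum_le {β : Type*} (f : β → ℝ) {l₁ l₂ : List β} (h : l₁.Sublist l₂)
    (h0 : ∀ x ∈ l₂, 0 < f x) (hsum : (l₂.map f).sum ≤ (l₁.map f).sum) : l₁ = l₂ := by
  induction h with
  | slnil => rfl
  | cons a h ih =>
      exfalso
      have h1 := sublist_sum_le' f h (fun x hx => (h0 x (List.mem_cons_of_mem _ hx)).le)
      have ha := h0 a (List.mem_cons_self)
      simp only [List.map_cons, List.sum_cons] at hsum
      linarith
  | cons_cons a h ih =>
      simp only [List.map_cons, List.sum_cons] at hsum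
      rw [ih (fun x hx => h0 x (List.mem_cons_of_mem _ hx)) (by linarith)]

end ListFacts

namespace HostTree

variable (T : HostTree)

noncomputable def pth (x y : T.V) : T.G.Walk x y :=
  (T.isTree.existsUnique_path x y).choose

lemma pth_isPath (x y : T.V) : (T.pth x y).IsPath :=
  (T.isTree.existsUnique_path x y).choose_spec.1

lemma pth_unique {x y : T.V} (p : T.G.Walk x y) (hp : p.IsPath) : p = T.pth x y :=
  (T.isTree.existsUnique_path x y).choose_spec.2 p hp

/-- weight of a walk -/
noncomputable def wW {x y : T.V} (p : T.G.Walk x y) : ℝ :=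
  (p.darts.map (fun d => T.w d.toProd.1 d.toProd.2)).sum

/-- weight of an edge -/
noncomputable def eW : Sym2 T.V → ℝ := Sym2.lift ⟨T.w, T.w_symm⟩

lemma eW_pos {e : Sym2 T.V} (he : e ∈ T.G.edgeSet) : 0 < T.eW e := by
  induction e with
  | h x y =>
      rw [SimpleGraph.mem_edgeSet] at he
      simpa [eW] using T.w_pos x y he

lemma wW_eq_edges_sum {x y : T.V} (p : T.G.Walk x y) :
    T.wW p = (p.edges.map T.eW).sum := by
  unfold wW SimpleGraph.Walk.edges
  rw [List.map_map]
  congr 1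

lemma wW_nonneg {x y : T.V} (p : T.G.Walk x y) : 0 ≤ T.wW p := by
  apply List.sum_nonneg
  intro a ha
  obtain ⟨d, _, rfl⟩ := List.mem_map.1 ha
  exact (T.w_pos _ _ d.adj).le

lemma wW_pos {x y : T.V} (hxy : x ≠ y) (p : T.G.Walk x y) : 0 < T.wW p := by
  cases p with
  | nil => exact absurd rfl hxy
  | cons h q =>
      simp only [wW, SimpleGraph.Walk.darts_cons, List.map_cons, List.sum_cons]
      have := T.wW_nonneg q
      have := T.w_pos _ _ h
      unfold wW at *
      linarith

lemma wW_append {x y z : T.V} (p : T.G.Walk x y) (q : T.G.Walk y z) :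
    T.wW (p.append q) = T.wW p + T.wW q := by
  simp [wW, SimpleGraph.Walk.darts_append]

lemma wW_reverse {x y : T.V} (p : T.G.Walk x y) : T.wW p.reverse = T.wW p := by
  simp only [wW, SimpleGraph.Walk.darts_reverse, List.map_reverse, List.sum_reverse,
    List.map_map]
  congr 1
  apply List.map_congr_left
  intro d _
  simp [SimpleGraph.Dart.symm, T.w_symm]

lemma wW_concat {x y z : T.V} (p : T.G.Walk x y) (h : T.G.Adj y z) :
    T.wW (p.concat h) = T.wW p + T.w y z := by
  simp [wW, SimpleGraph.Walk.darts_concat]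

noncomputable def wdist (x y : T.V) : ℝ := T.wW (T.pth x y)

lemma depth_eq_wdist (x : T.V) : T.depth x = T.wdist T.root x := rfl

lemma wdist_self (x : T.V) : T.wdist x x = 0 := by
  have h : (SimpleGraph.Walk.nil : T.G.Walk x x) = T.pth x x :=
    T.pth_unique _ SimpleGraph.Walk.IsPath.nil
  rw [wdist, ← h]
  simp [wW]

lemma wdist_nonneg (x y : T.V) : 0 ≤ T.wdist x y := T.wW_nonneg _

lemma wdist_pos {x y : T.V} (h : x ≠ y) : 0 < T.wdist x y := T.wW_pos h _

lemma eq_of_wdist_nonpos {x y : T.V} (h : T.wdist x y ≤ 0) : x = y := by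
  by_contra hne
  exact absurd h (not_le.2 (T.wdist_pos hne))

lemma wdist_comm (x y : T.V) : T.wdist x y = T.wdist y x := by
  have h : (T.pth x y).reverse = T.pth y x := T.pth_unique _ (T.pth_isPath x y).reverse
  rw [wdist, wdist, ← h, wW_reverse]

lemma wdist_adj {x y : T.V} (h : T.G.Adj x y) : T.wdist x y = T.w x y := by
  have hp : (SimpleGraph.Walk.cons h SimpleGraph.Walk.nil).IsPath := by
    simp [SimpleGraph.Walk.cons_isPath_iff, h.ne]
  have := T.pth_unique _ hp
  rw [wdist, ← this]
  simp [wW]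

lemma wdist_le_wW {x y : T.V} (p : T.G.Walk x y) : T.wdist x y ≤ T.wW p := by
  classical
  have hb : p.bypass = T.pth x y := T.pth_unique _ p.bypass_isPath
  rw [wdist, ← hb, wW_eq_edges_sum, wW_eq_edges_sum]
  obtain ⟨l', hperm, hsl⟩ := List.subperm_of_subset p.bypass_isPath.isTrail.edges_nodup
    p.edges_bypass_subset
  calc (p.bypass.edges.map T.eW).sum = (l'.map T.eW).sum := ((hperm.map T.eW).sum_eq).symm
    _ ≤ (p.edges.map T.eW).sum := sublist_sum_le' T.eW hsl
        (fun e he => (T.eW_pos (p.edges_subset_edgeSet he)).le)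

lemma wdist_triangle (x y z : T.V) : T.wdist x z ≤ T.wdist x y + T.wdist y z := by
  have := T.wdist_le_wW ((T.pth x y).append (T.pth y z))
  rwa [wW_append] at this

lemma wdist_add_of_mem_support {x y q : T.V} (hq : q ∈ (T.pth x y).support) :
    T.wdist x q + T.wdist q y = T.wdist x y := by
  classical
  have h1 : (T.pth x y).takeUntil q hq = T.pth x q :=
    T.pth_unique _ ((T.pth_isPath x y).takeUntil hq)
  have h2 : (T.pth x y).dropUntil q hq = T.pth q y :=
    T.pth_unique _ ((T.pth_isPath x y).dropUntil hq)
  have h3 := SimpleGraph.Walk.take_spec (T.pth x y) hq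
  calc T.wdist x q + T.wdist q y
      = T.wW (((T.pth x y).takeUntil q hq).append ((T.pth x y).dropUntil q hq)) := by
        rw [wW_append, h1, h2]; rfl
    _ = T.wdist x y := by rw [h3]; rfl

lemma pth_eq_append {x y q : T.V} (hq : q ∈ (T.pth x y).support) :
    T.pth x y = (T.pth x q).append (T.pth q y) := by
  classical
  have h1 : (T.pth x y).takeUntil q hq = T.pth x q :=
    T.pth_unique _ ((T.pth_isPath x y).takeUntil hq)
  have h2 : (T.pth x y).dropUntil q hq = T.pth q y :=
    T.pth_unique _ ((T.pth_isPath x y).dropUntil hq)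
  rw [← h1, ← h2, SimpleGraph.Walk.take_spec]

lemma mem_support_of_wdist_add {x y q : T.V}
    (h : T.wdist x q + T.wdist q y = T.wdist x y) : q ∈ (T.pth x y).support := by
  classical
  rcases eq_or_ne q x with rfl | hqx
  · exact (T.pth q y).start_mem_support
  rcases eq_or_ne q y with rfl | hqy
  · exact (T.pth x q).end_mem_support
  set W := (T.pth x q).append (T.pth q y) with hWdef
  have hW : T.wW W = T.wdist x y := by rw [hWdef, wW_append]; exact h
  have hb : W.bypass = T.pth x y := T.pth_unique _ W.bypass_isPath
  -- sums of edge weights agree, so edges of W all appear in the bypass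
  obtain ⟨l', hperm, hsl⟩ := List.subperm_of_subset W.bypass_isPath.isTrail.edges_nodup
    W.edges_bypass_subset
  have hsum : (W.edges.map T.eW).sum ≤ (l'.map T.eW).sum := by
    have e1 : (l'.map T.eW).sum = (W.bypass.edges.map T.eW).sum := (hperm.map T.eW).sum_eq
    have e2 : (W.bypass.edges.map T.eW).sum = T.wdist x y := by
      rw [← wW_eq_edges_sum, hb]; rfl
    rw [e1, e2, ← hW, wW_eq_edges_sum]
  have hleq : l' = W.edges :=
    sublist_eq_of_sum_le T.eW hsl (fun e he => T.eW_pos (W.edges_subset_edgeSet he)) hsum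
  -- find an edge of W containing q
  have hnn : ¬ (T.pth q x).Nil := SimpleGraph.Walk.not_nil_of_ne hqx
  obtain ⟨z, hadj, R, hR⟩ := SimpleGraph.Walk.not_nil_iff.1 hnn
  have hqz : s(q, z) ∈ (T.pth q x).edges := by
    rw [hR]; simp [SimpleGraph.Walk.edges_cons]
  have hrev : (T.pth x q).reverse = T.pth q x := T.pth_unique _ (T.pth_isPath x q).reverse
  have hqz2 : s(q, z) ∈ (T.pth x q).edges := by
    rw [← hrev, SimpleGraph.Walk.edges_reverse, List.mem_reverse] at hqz
    exact hqz
  have hqzW : s(q, z) ∈ W.edges := by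
    rw [hWdef, SimpleGraph.Walk.edges_append, List.mem_append]
    exact Or.inl hqz2
  have hqzb : s(q, z) ∈ (T.pth x y).edges := by
    rw [← hb]
    rw [← hleq] at hqzW
    exact hperm.mem_iff.1 hqzW
  exact (T.pth x y).fst_mem_support_of_mem_edges hqzb

/-! ### Ancestors -/

/-- `p` is an ancestor of `q`. -/
def Anc (p q : T.V) : Prop := T.depth p + T.wdist p q = T.depth q

lemma anc_refl (p : T.V) : T.Anc p p := by simp [Anc, wdist_self]

lemma anc_depth_le {p q : T.V} (h : T.Anc p q) : T.depth p ≤ T.depth q := by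
  have := T.wdist_nonneg p q
  unfold Anc at h
  linarith

lemma anc_eq {p q : T.V} (h : T.Anc p q) (hd : T.depth p = T.depth q) : p = q := by
  apply T.eq_of_wdist_nonpos
  unfold Anc at h
  linarith

lemma depth_triangle (x y : T.V) : T.depth y ≤ T.depth x + T.wdist x y := by
  rw [depth_eq_wdist, depth_eq_wdist]
  exact T.wdist_triangle _ _ _

lemma anc_trans {p q x : T.V} (h1 : T.Anc p q) (h2 : T.Anc q x) :
    T.Anc p x ∧ T.wdist p q + T.wdist q x = T.wdist p x := by
  have t1 : T.wdist p x ≤ T.wdist p q + T.wdist q x := T.wdist_triangle _ _ _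
  have t2 : T.depth x ≤ T.depth p + T.wdist p x := T.depth_triangle _ _
  unfold Anc at h1 h2 ⊢
  constructor <;> linarith

lemma mem_rootPath_of_anc {p q : T.V} (h : T.Anc p q) :
    p ∈ (T.pth T.root q).support := by
  apply T.mem_support_of_wdist_add
  rw [← depth_eq_wdist, ← depth_eq_wdist]
  exact h

lemma anc_of_anc_anc {p q x : T.V} (h1 : T.Anc p x) (h2 : T.Anc q x)
    (hle : T.depth p ≤ T.depth q) : T.Anc p q := by
  have hq : q ∈ (T.pth T.root x).support := T.mem_rootPath_of_anc h2
  have hsplit := T.pth_eq_append hq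
  have hp : p ∈ (T.pth T.root x).support := T.mem_rootPath_of_anc h1
  rw [hsplit, SimpleGraph.Walk.mem_support_append_iff] at hp
  rcases hp with hp | hp
  · have := T.wdist_add_of_mem_support hp
    rw [← depth_eq_wdist, ← depth_eq_wdist] at this
    exact this
  · have h3 := T.wdist_add_of_mem_support hp
    simp only [Anc, depth_eq_wdist] at h1 h2 hle
    have h4 : T.wdist q p ≤ 0 := by linarith
    have : q = p := T.eq_of_wdist_nonpos h4
    subst this
    exact T.anc_refl q
  
lemma adj_anc {x y : T.V} (h : T.G.Adj x y) : T.Anc x y ∨ T.Anc y x := by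
  by_cases hy : y ∈ (T.pth T.root x).support
  · right
    have := T.wdist_add_of_mem_support hy
    rw [← depth_eq_wdist] at this
    unfold Anc
    rw [T.depth_eq_wdist x]
    linarith [this]
  · left
    have hP : ((T.pth T.root x).concat h).IsPath := by
      rw [← SimpleGraph.Walk.isPath_reverse_iff, SimpleGraph.Walk.reverse_concat]
      rw [SimpleGraph.Walk.cons_isPath_iff]
      refine ⟨(T.pth_isPath T.root x).reverse, ?_⟩
      rw [SimpleGraph.Walk.support_reverse, List.mem_reverse]
      exact hy
    have he : (T.pth T.root x).concat h = T.pth T.root y := T.pth_unique _ hP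
    have hd : T.depth y = T.depth x + T.w x y := by
      rw [depth_eq_wdist, depth_eq_wdist, wdist, wdist, ← he, wW_concat]
    unfold Anc
    rw [T.wdist_adj h, hd]

/-! ### Subtrees -/

lemma subtree_support_subset {S : Set T.V} (hS : T.IsSubtree S) {p x : T.V}
    (hp : p ∈ S) (hx : x ∈ S) : ∀ z ∈ (T.pth p x).support, z ∈ S := by
  classical
  obtain ⟨W0⟩ := hS.2.preconnected ⟨p, hp⟩ ⟨x, hx⟩
  let f : T.G.induce S →g T.G := (SimpleGraph.Embedding.induce S).toHom
  let W : T.G.Walk p x := W0.map f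
  have hsup : ∀ z ∈ W.support, z ∈ S := by
    intro z hz
    change z ∈ (W0.map f).support at hz
    rw [SimpleGraph.Walk.support_map, List.mem_map] at hz
    obtain ⟨⟨z', hz'⟩, _, rfl⟩ := hz
    exact hz'
  have hb : W.bypass = T.pth p x := T.pth_unique _ W.bypass_isPath
  intro z hz
  apply hsup
  apply W.support_bypass_subset
  rw [hb]
  exact hz

lemma root_anc {S : Set T.V} (hS : T.IsSubtree S) {ρ : T.V}
    (hρ : T.IsSubtreeRoot S ρ) {x : T.V} (hx : x ∈ S) : T.Anc ρ x := by
  suffices aux : ∀ {y z : T.V} (Q : T.G.Walk y z), Q.IsPath →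
      (∀ w ∈ Q.support, w ∈ S) → T.Anc ρ z → T.Anc ρ y by
    exact aux (T.pth x ρ) (T.pth_isPath x ρ) (T.subtree_support_subset hS hx hρ.1)
      (T.anc_refl ρ)
  intro y z Q
  induction Q with
  | nil => intro _ _ hz; exact hz
  | @cons u v _ hadj Q' ih =>
      intro hQ hsub hz
      have hu : u ∈ S := hsub _ (Q'.cons hadj).start_mem_support
      have hv : T.Anc ρ v := ih hQ.of_cons
        (fun w hw => hsub w (by rw [SimpleGraph.Walk.support_cons]; exact List.mem_cons_of_mem _ hw)) hz
      rcases T.adj_anc hadj with huv | hvu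
      · exact T.anc_of_anc_anc hv huv (hρ.2 u hu)
      · exact (T.anc_trans hv hvu).1

lemma root_unique {S : Set T.V} (hS : T.IsSubtree S) {ρ : T.V}
    (hρ : T.IsSubtreeRoot S ρ) {x : T.V} (hx : x ∈ S)
    (hd : T.depth x ≤ T.depth ρ) : x = ρ := by
  have h := T.root_anc hS hρ hx
  exact (T.anc_eq h (le_antisymm (T.anc_depth_le h) hd)).symm

lemma mem_of_between {S : Set T.V} (hS : T.IsSubtree S) {p s q : T.V}
    (hp : p ∈ S) (hs : s ∈ S) (h1 : T.Anc p q) (h2 : T.Anc q s) : q ∈ S := by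
  have hbet := (T.anc_trans h1 h2).2
  have hq : q ∈ (T.pth p s).support := T.mem_support_of_wdist_add hbet
  exact T.subtree_support_subset hS hp hs q hq

end HostTree

/-- In a compatible tree representation with pairwise distinct subtree roots,
every enumeration of the vertices by non-increasing root depth is a strong
elimination order. -/
theorem distinct_roots_bottom_up_strongElimOrder {α : Type} [Fintype α]
    (G : SimpleGraph α) (T : HostTree) (t : α → Set T.V)
    (h : IsCompatibleTreeRep G T t)
    (rt : α → T.V) (hrt : ∀ v : α, T.IsSubtreeRoot (t v) (rt v))
    (hinj : Function.Injective rt)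
    {n : ℕ} (σ : Fin n ≃ α)
    (hmono : ∀ i j : Fin n, i ≤ j → T.depth (rt (σ j)) ≤ T.depth (rt (σ i))) :
    IsStrongElimOrder G σ := by
  have hnbhd : ∀ u v : α, v ∈ closedNbhd G u ↔ (t u ∩ t v).Nonempty := by
    intro u v
    constructor
    · intro hv
      rcases Set.mem_insert_iff.1 hv with rfl | hadj
      · rw [Set.inter_self]; exact (h.1.1 v).1
      · have hadj' : G.Adj u v := hadj
        exact (h.1.2 u v hadj'.ne).1 hadj'
    · intro hne
      rcases eq_or_ne v u with rfl | hvu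
      · exact Set.mem_insert _ _
      · have : G.Adj u v := (h.1.2 u v hvu.symm).2 hne
        exact Set.mem_insert_iff.2 (Or.inr this)
  -- key lemma: if subtrees meet and rt u is at least as deep as rt v then rt u ∈ t v
  have key : ∀ u v : α, (t u ∩ t v).Nonempty →
      T.depth (rt v) ≤ T.depth (rt u) → rt u ∈ t v := by
    intro u v hne hle
    rcases h.2 u v with hov | hov
    · -- t u overshadows t v : then rt v ∈ t u, depths equal, roots equal
      by_cases hvu : rt v ∈ t u
      · have h1 : T.depth (rt u) ≤ T.depth (rt v) := (hrt u).2 _ hvu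
        have h2 : rt v = rt u :=
          T.root_unique (h.1.1 u) (hrt u) hvu hle
        have : v = u := hinj h2
        subst this
        exact (hrt v).1
      · obtain ⟨y, hy⟩ := hne
        have := hov (rt v) ⟨(hrt v).1, hvu⟩ y ⟨hy.2, hy.1⟩
        have := (hrt v).2 y hy.2
        linarith
    · -- t v overshadows t u : then rt u ∈ t v
      by_contra huv
      obtain ⟨y, hy⟩ := hne
      have := hov (rt u) ⟨(hrt u).1, huv⟩ y ⟨hy.1, hy.2⟩
      have := (hrt u).2 y hy.1
      linarith
  intro i j k l hij hkl hki hli hkj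
  set a := σ i with ha
  set b := σ j with hb
  set c := σ k with hc
  set d := σ l with hd
  have hAC : (t a ∩ t c).Nonempty := (hnbhd a c).1 hki
  have hAD : (t a ∩ t d).Nonempty := (hnbhd a d).1 hli
  have hBC : (t b ∩ t c).Nonempty := (hnbhd b c).1 hkj
  have hsymm : ∀ {u v : α}, (t u ∩ t v).Nonempty → (t v ∩ t u).Nonempty :=
    fun ⟨x, hx⟩ => ⟨x, hx.2, hx.1⟩
  have hba : T.depth (rt b) ≤ T.depth (rt a) := hmono i j hij.le
  have hdc : T.depth (rt d) ≤ T.depth (rt c) := hmono k l hkl.le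
  have hab : a ≠ b := fun e => (Fin.lt_iff_le_and_ne.1 hij).2 (σ.injective e)
  rw [hnbhd]
  rcases le_or_gt (T.depth (rt a)) (T.depth (rt d)) with h1 | h2
  · -- Case 1 : depth α ≤ depth δ
    have hδA : rt d ∈ t a := key d a (hsymm hAD) h1
    have hβγ : T.depth (rt b) ≤ T.depth (rt c) := by linarith
    have hγB : rt c ∈ t b := key c b (hsymm hBC) hβγ
    have hγA : rt c ∈ t a := key c a (hsymm hAC) (by linarith)
    have hancβγ : T.Anc (rt b) (rt c) := T.root_anc (h.1.1 b) (hrt b) hγB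
    have hancαγ : T.Anc (rt a) (rt c) := T.root_anc (h.1.1 a) (hrt a) hγA
    have hancβα : T.Anc (rt b) (rt a) := T.anc_of_anc_anc hancβγ hancαγ hba
    have hαB : rt a ∈ t b := T.mem_of_between (h.1.1 b) (hrt b).1 hγB hancβα hancαγ
    rcases h.2 a b with hov | hov
    · -- t a overshadows t b
      exfalso
      have hβA : rt b ∉ t a := by
        intro hmem
        have h3 : T.depth (rt a) ≤ T.depth (rt b) := (hrt a).2 _ hmem
        have h4 : rt b = rt a := T.anc_eq hancβα (le_antisymm hba h3)
        exact hab (hinj h4).symm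
      have := hov (rt b) ⟨(hrt b).1, hβA⟩ (rt a) ⟨hαB, (hrt a).1⟩
      linarith
    · -- t b overshadows t a
      by_cases hδB : rt d ∈ t b
      · exact ⟨rt d, hδB, (hrt d).1⟩
      · exfalso
        have := hov (rt d) ⟨hδA, hδB⟩ (rt c) ⟨hγA, hγB⟩
        linarith
  · -- Case 2 : depth δ < depth α
    have hαD : rt a ∈ t d := key a d hAD h2.le
    rcases le_or_gt (T.depth (rt a)) (T.depth (rt c)) with h3 | h4
    · -- Case 2a : depth α ≤ depth γ
      have hγA : rt c ∈ t a := key c a (hsymm hAC) h3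
      have hγB : rt c ∈ t b := key c b (hsymm hBC) (by linarith)
      have hancβγ : T.Anc (rt b) (rt c) := T.root_anc (h.1.1 b) (hrt b) hγB
      have hancαγ : T.Anc (rt a) (rt c) := T.root_anc (h.1.1 a) (hrt a) hγA
      have hancβα : T.Anc (rt b) (rt a) := T.anc_of_anc_anc hancβγ hancαγ hba
      have hαB : rt a ∈ t b := T.mem_of_between (h.1.1 b) (hrt b).1 hγB hancβα hancαγ
      exact ⟨rt a, hαB, hαD⟩
    · -- Case 2b : depth γ < depth α
      have hαC : rt a ∈ t c := key a c hAC h4.le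
      have hCD : (t c ∩ t d).Nonempty := ⟨rt a, hαC, hαD⟩
      rcases le_or_gt (T.depth (rt b)) (T.depth (rt c)) with h5 | h6
      · -- Case 2b-i : depth β ≤ depth γ
        have hγB : rt c ∈ t b := key c b (hsymm hBC) h5
        have hγD : rt c ∈ t d := key c d hCD hdc
        exact ⟨rt c, hγB, hγD⟩
      · -- Case 2b-ii : depth γ < depth β
        have hβC : rt b ∈ t c := key b c hBC h6.le
        by_cases hβD : rt b ∈ t d
        · exact ⟨rt b, (hrt b).1, hβD⟩
        · by_cases hδC : rt d ∈ t c
          · -- rt d = rt c, so c = d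
            have hδγ : rt d = rt c := T.root_unique (h.1.1 c) (hrt c) hδC hdc
            have hcd : c = d := (hinj hδγ).symm
            rw [← hcd]
            exact hBC
          · rcases h.2 c d with hov | hov
            · exfalso
              have := hov (rt d) ⟨(hrt d).1, hδC⟩ (rt a) ⟨hαD, hαC⟩
              linarith
            · exfalso
              have := hov (rt b) ⟨hβC, hβD⟩ (rt a) ⟨hαC, hαD⟩
              linarith
end

section
/- If a finite simple graph G has a perfect elimination order, then G has a tree representation, i.e., G is the intersection graph of a collection of subtrees of a finite tree. -/
/-- A perfect elimination order: for each `i`, the later neighbours of `vᵢ`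
form a clique. -/
def IsPerfectElimOrder {α : Type*} (G : SimpleGraph α) {n : ℕ} (σ : Fin n ≃ α) : Prop :=
  ∀ i j k : Fin n, i < j → i < k → j ≠ k →
    G.Adj (σ i) (σ j) → G.Adj (σ i) (σ k) → G.Adj (σ j) (σ k)


section AuxTreeRep

variable {α : Type} [Fintype α] {n : ℕ}

open Classical in
noncomputable def laterNbrs (G : SimpleGraph α) (σ : Fin n ≃ α) (a : α) : Finset (Fin n) :=
  Finset.univ.filter (fun j => σ.symm a < j ∧ G.Adj a (σ j))

open Classical in
noncomputable def par (G : SimpleGraph α) (σ : Fin n ≃ α) (a : α) : Option α :=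
  if h : (laterNbrs G σ a).Nonempty then some (σ ((laterNbrs G σ a).min' h)) else none

lemma mem_laterNbrs {G : SimpleGraph α} {σ : Fin n ≃ α} {a : α} {j : Fin n} :
    j ∈ laterNbrs G σ a ↔ σ.symm a < j ∧ G.Adj a (σ j) := by
  classical
  simp [laterNbrs]

lemma par_spec {G : SimpleGraph α} {σ : Fin n ≃ α} {a b : α} (h : par G σ a = some b) :
    σ.symm a < σ.symm b ∧ G.Adj a b ∧
      ∀ j : Fin n, σ.symm a < j → G.Adj a (σ j) → σ.symm b ≤ j := by
  classical
  unfold par at h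
  split_ifs at h with hne
  · have hb : σ ((laterNbrs G σ a).min' hne) = b := Option.some_injective _ h
    have hm := mem_laterNbrs.mp (Finset.min'_mem (laterNbrs G σ a) hne)
    have hsb : σ.symm b = (laterNbrs G σ a).min' hne := by rw [← hb]; simp
    refine ⟨by rw [hsb]; exact hm.1, by rw [← hb]; exact hm.2, ?_⟩
    intro j hj hadj
    rw [hsb]
    exact Finset.min'_le _ j (mem_laterNbrs.mpr ⟨hj, hadj⟩)

lemma par_isSome {G : SimpleGraph α} {σ : Fin n ≃ α} {a : α} {j : Fin n}
    (h1 : σ.symm a < j) (h2 : G.Adj a (σ j)) : ∃ b, par G σ a = some b := by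
  classical
  have hne : (laterNbrs G σ a).Nonempty := ⟨j, mem_laterNbrs.mpr ⟨h1, h2⟩⟩
  refine ⟨σ ((laterNbrs G σ a).min' hne), ?_⟩
  unfold par
  exact dif_pos hne

def hostG (G : SimpleGraph α) (σ : Fin n ≃ α) : SimpleGraph (Option α) where
  Adj x y := (∃ a, x = some a ∧ par G σ a = y) ∨ (∃ a, y = some a ∧ par G σ a = x)
  symm := ⟨by intro x y hxy; exact Or.symm hxy⟩
  loopless := by
    refine ⟨fun x hx => ?_⟩
    rcases hx with ⟨a, rfl, hp⟩ | ⟨a, rfl, hp⟩ <;>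
      exact absurd (par_spec hp).1 (lt_irrefl _)

def rnk (σ : Fin n ≃ α) : Option α → ℕ
  | none => n
  | some a => (σ.symm a : ℕ)

lemma rnk_lt_of_some (σ : Fin n ≃ α) (a : α) : rnk σ (some a) < n := (σ.symm a).isLt

lemma eq_none_of_rnk (σ : Fin n ≃ α) {y : Option α} (h : n ≤ rnk σ y) : y = none := by
  cases y with
  | none => rfl
  | some a => exact absurd h (by simpa using rnk_lt_of_some σ a)

lemma hostG_acyclic (G : SimpleGraph α) (σ : Fin n ≃ α) : (hostG G σ).IsAcyclic := by
  classical
  intro v c hc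
  obtain ⟨x, hxmem, hxmin⟩ := Finset.exists_min_image c.support.toFinset (rnk σ)
    ⟨v, List.mem_toFinset.mpr c.start_mem_support⟩
  have hxmem' : x ∈ c.support := List.mem_toFinset.mp hxmem
  have hmin : ∀ y ∈ c.support, rnk σ x ≤ rnk σ y :=
    fun y hy => hxmin y (List.mem_toFinset.mpr hy)
  -- x must be of the form some a
  obtain ⟨a, rfl⟩ : ∃ a, x = some a := by
    cases hx : x with
    | some a => exact ⟨a, rfl⟩
    | none =>
      exfalso
      subst hx
      have hnil : ¬ c.Nil := hc.not_nil
      have hd : c.darts ≠ [] := by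
        intro h0
        have := congrArg List.length h0
        simp only [SimpleGraph.Walk.length_darts, List.length_nil] at this
        have := hc.three_le_length
        omega
      set d := c.darts.head hd with hddef
      have hdm : d ∈ c.darts := List.head_mem hd
      have h1 : d.fst = none := eq_none_of_rnk σ
        (hmin _ (SimpleGraph.Walk.dart_fst_mem_support_of_mem_darts _ hdm))
      have h2 : d.snd = none := eq_none_of_rnk σ
        (hmin _ (SimpleGraph.Walk.dart_snd_mem_support_of_mem_darts _ hdm))
      have := d.adj
      rw [h1, h2] at this
      exact (hostG G σ).loopless.irrefl _ this
  -- rotate the cycle to start at some a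
  set c' := c.rotate _ hxmem' with hc'def
  have hc' : c'.IsCycle := hc.rotate hxmem'
  have hdperm : ∀ d, d ∈ c'.darts → d ∈ c.darts := by
    intro d hd
    exact (SimpleGraph.Walk.rotate_darts c _ hxmem').mem_iff.mp hd
  have hdne : c'.darts ≠ [] := by
    intro h0
    have := congrArg List.length h0
    simp only [SimpleGraph.Walk.length_darts, List.length_nil] at this
    have := hc'.three_le_length
    omega
  -- key: any host-neighbour of (some a) on the cycle is its parent
  have key : ∀ y : Option α, (hostG G σ).Adj (some a) y → y ∈ c.support → y = par G σ a := by
    intro y hadj hy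
    rcases hadj with ⟨b, hb, hp⟩ | ⟨b, hb, hp⟩
    · rw [← hp, Option.some_injective _ hb]
    · exfalso
      subst hb
      have h1 := (par_spec hp).1
      have h2 := hmin _ hy
      simp only [rnk] at h2
      omega
  set d₁ := c'.darts.head hdne with hd₁def
  set d₂ := c'.darts.getLast hdne with hd₂def
  have hd₁m : d₁ ∈ c.darts := hdperm _ (List.head_mem hdne)
  have hd₂m : d₂ ∈ c.darts := hdperm _ (List.getLast_mem hdne)
  have hd₁f : d₁.fst = some a := by
    rw [hd₁def, SimpleGraph.Walk.head_darts_eq_firstDart]; rfl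
  have hd₂s : d₂.snd = some a := by
    rw [hd₂def, SimpleGraph.Walk.getLast_darts_eq_lastDart]; rfl
  have hd₁s : d₁.snd = par G σ a := by
    apply key
    · rw [← hd₁f]; exact d₁.adj
    · exact SimpleGraph.Walk.dart_snd_mem_support_of_mem_darts _ hd₁m
  have hd₂f : d₂.fst = par G σ a := by
    apply key
    · rw [← hd₂s]; exact ((hostG G σ).symm.symm _ _ d₂.adj)
    · exact SimpleGraph.Walk.dart_fst_mem_support_of_mem_darts _ hd₂m
  have hne12 : d₁ ≠ d₂ := by
    intro heq
    have : d₁.fst = d₂.fst := by rw [heq]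
    rw [hd₁f, hd₂f] at this
    have hadj : (hostG G σ).Adj d₁.fst d₁.snd := d₁.adj
    rw [hd₁f, hd₁s, ← this] at hadj
    exact (hostG G σ).loopless.irrefl _ hadj
  have hedge : d₁.edge = d₂.edge := by
    have e1 : d₁.edge = s(some a, par G σ a) := by
      rw [SimpleGraph.Dart.edge, ← hd₁f, ← hd₁s]
    have e2 : d₂.edge = s(par G σ a, some a) := by
      rw [SimpleGraph.Dart.edge, ← hd₂f, ← hd₂s]
    rw [e1, e2, Sym2.eq_swap]
  have hnodup : (c'.darts.map SimpleGraph.Dart.edge).Nodup := by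
    have := hc'.isCircuit.isTrail.edges_nodup
    simpa [SimpleGraph.Walk.edges] using this
  exact hne12 (List.inj_on_of_nodup_map hnodup (List.head_mem hdne)
    (List.getLast_mem hdne) hedge)

lemma hostG_reach_none (G : SimpleGraph α) (σ : Fin n ≃ α) (a : α) :
    (hostG G σ).Reachable (some a) none := by
  classical
  suffices h : ∀ k (a : α), n - (σ.symm a : ℕ) ≤ k → (hostG G σ).Reachable (some a) none by
    exact h n a (Nat.sub_le _ _)
  intro k
  induction k with
  | zero =>
    intro a ha
    exact absurd ha (by have := (σ.symm a).isLt; omega)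
  | succ k ih =>
    intro a ha
    cases hpa : par G σ a with
    | none => exact SimpleGraph.Adj.reachable (Or.inl ⟨a, rfl, hpa⟩)
    | some b =>
      have hadj : (hostG G σ).Adj (some a) (some b) := Or.inl ⟨a, rfl, hpa⟩
      refine hadj.reachable.trans (ih b ?_)
      have h1 := (par_spec hpa).1
      have h2 : ((σ.symm a : Fin n) : ℕ) < ((σ.symm b : Fin n) : ℕ) := h1
      omega

lemma hostG_connected (G : SimpleGraph α) (σ : Fin n ≃ α) : (hostG G σ).Connected := by
  rw [SimpleGraph.connected_iff]
  refine ⟨?_, ⟨none⟩⟩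
  intro x y
  have key : ∀ z : Option α, (hostG G σ).Reachable z none := by
    intro z
    cases z with
    | none => exact SimpleGraph.Reachable.refl _
    | some a => exact hostG_reach_none G σ a
  exact (key x).trans (key y).symm

noncomputable def hostT (G : SimpleGraph α) (σ : Fin n ≃ α) : HostTree where
  V := Option α
  G := hostG G σ
  isTree := ⟨hostG_connected G σ, hostG_acyclic G σ⟩
  root := none
  w := fun _ _ => 1
  w_symm := fun _ _ => rfl
  w_pos := fun _ _ _ => one_pos

def tset (G : SimpleGraph α) (σ : Fin n ≃ α) (v : α) : Set (Option α) :=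
  {x | ∃ u, x = some u ∧ (u = v ∨ (σ.symm u < σ.symm v ∧ G.Adj u v))}

lemma tset_reach (G : SimpleGraph α) (σ : Fin n ≃ α)
    (h : ∀ i j k : Fin n, i < j → i < k → j ≠ k →
      G.Adj (σ i) (σ j) → G.Adj (σ i) (σ k) → G.Adj (σ j) (σ k)) (v : α) :
    ∀ (k : ℕ) (u : α) (hu : some u ∈ tset G σ v),
      ((σ.symm v : ℕ) - (σ.symm u : ℕ)) ≤ k →
      ((hostG G σ).induce (tset G σ v)).Reachable ⟨some u, hu⟩
        ⟨some v, ⟨v, rfl, Or.inl rfl⟩⟩ := by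
  intro k
  induction k with
  | zero =>
    intro u hu hk
    obtain ⟨u', hu', hcase⟩ := hu
    have huu : u' = u := by
      have := hu'.symm
      simpa using this
    subst huu
    rcases hcase with rfl | ⟨hlt, _⟩
    · exact SimpleGraph.Reachable.refl _
    · exact absurd hk (by have : (σ.symm u' : ℕ) < σ.symm v := hlt; omega)
  | succ k ih =>
    intro u hu hk
    by_cases hcv : u = v
    · subst hcv
      exact SimpleGraph.Reachable.refl _
    · have hu2 := hu
      obtain ⟨u', hu', hcase⟩ := hu
      have huu : u' = u := by have := hu'.symm; simpa using this
      subst huu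
      rcases hcase with rfl | ⟨hlt, hadj⟩
      · exact absurd rfl hcv
      · obtain ⟨p, hp⟩ := par_isSome (σ := σ) (a := u') (j := σ.symm v) hlt
          (by rw [Equiv.apply_symm_apply]; exact hadj)
        obtain ⟨hup, hadjup, hmin⟩ := par_spec hp
        have hple : σ.symm p ≤ σ.symm v :=
          hmin (σ.symm v) hlt (by rw [Equiv.apply_symm_apply]; exact hadj)
        have hpmem : some p ∈ tset G σ v := by
          by_cases hpv : p = v
          · exact ⟨p, rfl, Or.inl hpv⟩
          · have hnesymm : σ.symm p ≠ σ.symm v := fun he => hpv (by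
              have := congrArg σ he
              simpa using this)
            refine ⟨p, rfl, Or.inr ⟨lt_of_le_of_ne hple hnesymm, ?_⟩⟩
            have hres := h (σ.symm u') (σ.symm p) (σ.symm v) hup hlt hnesymm
              (by simpa using hadjup) (by simpa using hadj)
            simpa using hres
        have hadjhost : ((hostG G σ).induce (tset G σ v)).Adj
            ⟨some u', hu2⟩ ⟨some p, hpmem⟩ := Or.inl ⟨u', rfl, hp⟩
        refine hadjhost.reachable.trans (ih p hpmem ?_)
        have h1 : (σ.symm u' : ℕ) < σ.symm p := hup
        have h2 : (σ.symm p : ℕ) ≤ σ.symm v := hple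
        omega

end AuxTreeRep

/-- A finite simple graph with a perfect elimination order has a tree
representation. -/
theorem perfectElimOrder_to_treeRep {α : Type} [Fintype α] (G : SimpleGraph α)
    {n : ℕ} (σ : Fin n ≃ α) (h : IsPerfectElimOrder G σ) :
    ∃ (T : HostTree) (t : α → Set T.V), IsTreeRep G T t := by
  classical
  refine ⟨hostT G σ, tset G σ, ?_, ?_⟩
  · intro v
    refine ⟨⟨some v, v, rfl, Or.inl rfl⟩, ?_⟩
    rw [SimpleGraph.connected_iff]
    refine ⟨?_, ⟨⟨some v, v, rfl, Or.inl rfl⟩⟩⟩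
    intro x y
    have key : ∀ z : tset G σ v,
        ((hostG G σ).induce (tset G σ v)).Reachable z ⟨some v, ⟨v, rfl, Or.inl rfl⟩⟩ := by
      rintro ⟨z, hz⟩
      have hz' := hz
      obtain ⟨u, hzu, _⟩ := hz'
      subst hzu
      exact tset_reach G σ h v ((σ.symm v : ℕ) - (σ.symm u : ℕ)) u hz le_rfl
    exact (key x).trans (key y).symm
  · intro u v huv
    constructor
    · intro hadj
      rcases lt_trichotomy (σ.symm u) (σ.symm v) with hlt | heq | hlt
      · exact ⟨some u, ⟨u, rfl, Or.inl rfl⟩, ⟨u, rfl, Or.inr ⟨hlt, hadj⟩⟩⟩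
      · exact absurd (by simpa using congrArg σ heq) huv
      · exact ⟨some v, ⟨v, rfl, Or.inr ⟨hlt, hadj.symm⟩⟩, ⟨v, rfl, Or.inl rfl⟩⟩
    · rintro ⟨x, hxu, hxv⟩
      obtain ⟨w, hxw, hcu⟩ := hxu
      subst hxw
      obtain ⟨w', hxw', hcv⟩ := hxv
      have hww : w' = w := by have := hxw'.symm; simpa using this
      subst hww
      rcases hcu with rfl | ⟨h1, h2⟩
      · rcases hcv with rfl | ⟨_, h4⟩
        · exact absurd rfl huv
        · exact h4
      · rcases hcv with rfl | ⟨h3, h4⟩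
        · exact h2.symm
        · have hne : σ.symm u ≠ σ.symm v := fun he => huv (by simpa using congrArg σ he)
          have hres := h (σ.symm w') (σ.symm u) (σ.symm v) h1 h3 hne
            (by simpa using h2) (by simpa using h4)
          simpa using hres
end

section
/- Let v₁,…,vₙ (n ≥ 1) be a perfect elimination order of a finite simple graph G, and perform Farber's construction: for each j < n let p(j) = min{k : k > j and v_k ∈ N[v_j]} if such k exists and p(j) = n otherwise; let T_G be the graph on nodes v₁,…,vₙ with edges {v_j, v_{p(j)}} for j = 1,…,n−1; and for each ℓ let T_ℓ = {v_i : i ≤ ℓ and v_i ∈ N[v_ℓ]}. Then: (a) T_G is a tree; (b) along the unique path in T_G from any v_j to vₙ the indices strictly increase; (c) each set T_ℓ induces a connected subgraph of T_G; and (d) for all k ≠ ℓ, the vertices v_k and v_ℓ are adjacent in G if and only if T_k ∩ T_ℓ ≠ ∅. -/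
/-- Farber's host graph: nodes `0,…,n-1` with an edge from each non-last node
`j` to `p j`. -/
def farberTG (n : ℕ) (p : Fin n → Fin n) : SimpleGraph (Fin n) :=
  SimpleGraph.fromRel (fun a b => (a : ℕ) < n - 1 ∧ b = p a)

/-- Farber's subtree for the vertex `v_ℓ`: the indices `i ≤ ℓ` with
`v_i ∈ N[v_ℓ]`. -/
def farberSub {α : Type*} (G : SimpleGraph α) {n : ℕ} (σ : Fin n ≃ α)
    (l : Fin n) : Set (Fin n) :=
  {i : Fin n | i ≤ l ∧ σ i ∈ closedNbhd G (σ l)}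


open SimpleGraph

section FarberAux

variable {n : ℕ} {p : Fin n → Fin n}

lemma farber_adj_p (h : ∀ j : Fin n, (j : ℕ) < n - 1 → j < p j) {j : Fin n}
    (hj : (j : ℕ) < n - 1) : (farberTG n p).Adj j (p j) := by
  rw [farberTG, SimpleGraph.fromRel_adj]
  exact ⟨ne_of_lt (h j hj), Or.inl ⟨hj, rfl⟩⟩

lemma farber_adj_gt (h : ∀ j : Fin n, (j : ℕ) < n - 1 → j < p j) {a x : Fin n}
    (hadj : (farberTG n p).Adj a x) (hax : a < x) : x = p a := by
  rw [farberTG, SimpleGraph.fromRel_adj] at hadj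
  rcases hadj with ⟨hne, h1 | h2⟩
  · exact h1.2
  · exfalso
    have := h x h2.1
    rw [← h2.2] at this
    exact absurd hax (not_lt_of_gt this)

/-- The canonical increasing walk from `j` to the last node. -/
def walkUp (hn : 1 ≤ n) (h : ∀ j : Fin n, (j : ℕ) < n - 1 → j < p j) :
    (j : Fin n) → (farberTG n p).Walk j ⟨n - 1, Nat.sub_lt_of_pos_le Nat.one_pos hn⟩ := fun j =>
  if hj : (j : ℕ) = n - 1 then
    (SimpleGraph.Walk.nil : (farberTG n p).Walk ⟨n - 1, Nat.sub_lt_of_pos_le Nat.one_pos hn⟩ _).copy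
      (Fin.ext hj).symm rfl
  else
    SimpleGraph.Walk.cons (farber_adj_p h (by have := j.isLt; omega))
      (walkUp hn h (p j))
termination_by j => n - 1 - (j : ℕ)
decreasing_by
  have h1 : (j : ℕ) < (p j : ℕ) := h j (by have := j.isLt; omega)
  have h2 := (p j).isLt
  omega

lemma walkUp_last (hn : 1 ≤ n) (h : ∀ j : Fin n, (j : ℕ) < n - 1 → j < p j)
    {j : Fin n} (hj : (j : ℕ) = n - 1) :
    walkUp hn h j = (SimpleGraph.Walk.nil : (farberTG n p).Walk ⟨n - 1, Nat.sub_lt_of_pos_le Nat.one_pos hn⟩ _).copy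
      (Fin.ext hj).symm rfl := by
  rw [walkUp]; exact dif_pos hj

lemma walkUp_not_last (hn : 1 ≤ n) (h : ∀ j : Fin n, (j : ℕ) < n - 1 → j < p j)
    {j : Fin n} (hj : (j : ℕ) ≠ n - 1) :
    walkUp hn h j = SimpleGraph.Walk.cons (farber_adj_p h (by have := j.isLt; omega))
      (walkUp hn h (p j)) := by
  rw [walkUp]; exact dif_neg hj

lemma chain_walkUp (hn : 1 ≤ n) (h : ∀ j : Fin n, (j : ℕ) < n - 1 → j < p j)
    (j : Fin n) : (walkUp hn h j).support.Chain' (· < ·) := by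
  by_cases hj : (j : ℕ) = n - 1
  · rw [walkUp_last hn h hj]
    simp
    exact List.isChain_singleton _
  · rw [walkUp_not_last hn h hj]
    rw [SimpleGraph.Walk.support_cons]
    refine List.isChain_cons.mpr ⟨?_, chain_walkUp hn h (p j)⟩
    intro y hy
    have hsupp := SimpleGraph.Walk.support_eq_cons (walkUp hn h (p j))
    rw [hsupp] at hy
    simp only [List.head?_cons, Option.mem_some_iff] at hy
    subst hy
    exact h j (by have := j.isLt; omega)
termination_by n - 1 - (j : ℕ)
decreasing_by
  have h1 : (j : ℕ) < (p j : ℕ) := h j (by have := j.isLt; omega)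
  have h2 := (p j).isLt
  omega

lemma isPath_walkUp (hn : 1 ≤ n) (h : ∀ j : Fin n, (j : ℕ) < n - 1 → j < p j)
    (j : Fin n) : (walkUp hn h j).IsPath := by
  rw [SimpleGraph.Walk.isPath_def]
  have := chain_walkUp hn h j
  rw [List.Chain', List.isChain_iff_pairwise] at this
  exact this.imp ne_of_lt

lemma eq_walkUp_aux (hn : 1 ≤ n) (h : ∀ j : Fin n, (j : ℕ) < n - 1 → j < p j)
    {t : Fin n} (ht : t = ⟨n - 1, Nat.sub_lt_of_pos_le Nat.one_pos hn⟩) (j : Fin n) (q : (farberTG n p).Walk j t)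
    (hq : q.IsPath) : q.copy rfl ht = walkUp hn h j := by
  induction q with
  | nil =>
    subst ht
    rw [SimpleGraph.Walk.copy_rfl_rfl, walkUp_last hn h rfl]
    exact (SimpleGraph.Walk.copy_rfl_rfl _).symm
  | @cons j b w hadj q' ih =>
    rw [SimpleGraph.Walk.cons_isPath_iff] at hq
    obtain ⟨hq', hjn⟩ := hq
    have hq'eq := ih ht hq'
    have hjlast : (j : ℕ) ≠ n - 1 := by
      intro hcon
      apply hjn
      have hjw : j = w := by rw [ht]; exact Fin.ext hcon
      rw [hjw]
      exact SimpleGraph.Walk.end_mem_support q'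
    rw [SimpleGraph.Walk.copy_cons]
    have hadj' := hadj
    rw [farberTG, SimpleGraph.fromRel_adj] at hadj'
    rcases hadj' with ⟨hne, h1 | h2⟩
    · obtain ⟨-, hb⟩ := h1
      subst hb
      rw [walkUp_not_last hn h hjlast]
      exact congrArg (SimpleGraph.Walk.cons _) hq'eq
    · exfalso
      obtain ⟨hb1, hb2⟩ := h2
      have hmem : j ∈ (walkUp hn h b).support := by
        rw [walkUp_not_last hn h (by omega), SimpleGraph.Walk.support_cons]
        right
        rw [← hb2]
        exact SimpleGraph.Walk.start_mem_support _
      rw [← hq'eq, SimpleGraph.Walk.support_copy] at hmem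
      exact hjn hmem

lemma eq_walkUp (hn : 1 ≤ n) (h : ∀ j : Fin n, (j : ℕ) < n - 1 → j < p j)
    (j : Fin n) (q : (farberTG n p).Walk j ⟨n - 1, Nat.sub_lt_of_pos_le Nat.one_pos hn⟩) (hq : q.IsPath) :
    q = walkUp hn h j := by
  have := eq_walkUp_aux hn h rfl j q hq
  rwa [SimpleGraph.Walk.copy_rfl_rfl] at this

lemma path_self_nil {V : Type*} {G : SimpleGraph V} {v : V} (q : G.Walk v v)
    (hq : q.IsPath) : q = SimpleGraph.Walk.nil := by
  cases q with
  | nil => rfl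
  | cons h r =>
    exfalso
    rw [SimpleGraph.Walk.cons_isPath_iff] at hq
    exact hq.2 (SimpleGraph.Walk.end_mem_support r)

lemma no_min_cycle (h : ∀ j : Fin n, (j : ℕ) < n - 1 → j < p j)
    (m : Fin n) (c : (farberTG n p).Walk m m) (hc : c.IsCycle)
    (hmin : ∀ x ∈ c.support, m ≤ x) : False := by
  cases c with
  | nil => exact SimpleGraph.Walk.IsCycle.not_of_nil hc
  | @cons _ b _ hadj rest =>
    have hcyc := (SimpleGraph.Walk.cons_isCycle_iff rest hadj).mp hc
    obtain ⟨hrest, hedge⟩ := hcyc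
    have hb : b = p m := by
      apply farber_adj_gt h hadj
      have hble : m ≤ b := by
        apply hmin
        rw [SimpleGraph.Walk.support_cons]
        right; exact SimpleGraph.Walk.start_mem_support rest
      exact lt_of_le_of_ne hble hadj.ne
    cases rest with
    | nil => exact hadj.ne rfl
    | @cons _ y0 _ h2 rest2 =>
      obtain ⟨x, q2, h2', heq⟩ := SimpleGraph.Walk.exists_cons_eq_concat h2 rest2
      have hxsupp : x ∈ (SimpleGraph.Walk.cons hadj (SimpleGraph.Walk.cons h2 rest2)).support := by
        rw [SimpleGraph.Walk.support_cons]
        right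
        rw [heq, SimpleGraph.Walk.support_concat]
        exact List.mem_append_left _ (SimpleGraph.Walk.end_mem_support q2)
      have hx : x = p m := by
        apply farber_adj_gt h h2'.symm
        exact lt_of_le_of_ne (hmin x hxsupp) h2'.ne'
      have hxb : x = b := by rw [hx, hb]
      subst hxb
      have hq2 : q2.IsPath := by
        have : (SimpleGraph.Walk.cons h2 rest2).IsPath := hrest
        rw [heq, SimpleGraph.Walk.concat_eq_append] at this
        exact this.of_append_left
      have hq2nil := path_self_nil q2 hq2
      subst hq2nil
      apply hedge
      rw [heq]
      simp [SimpleGraph.Walk.concat_nil, SimpleGraph.Walk.edges_cons, Sym2.eq_swap]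

end FarberAux

/-- Farber's construction from a perfect elimination order yields a tree, in
which indices strictly increase along the path from any node to the last one,
whose sets `T_ℓ` induce connected subgraphs, and which represents `G` by
intersections. -/
theorem farber_construction {α : Type} [Fintype α] (G : SimpleGraph α)
    {n : ℕ} (hn : 1 ≤ n) (σ : Fin n ≃ α) (hσ : IsPerfectElimOrder G σ)
    (p : Fin n → Fin n)
    (hp1 : ∀ j : Fin n, (∃ k : Fin n, j < k ∧ G.Adj (σ j) (σ k)) →
      (j < p j ∧ G.Adj (σ j) (σ (p j)) ∧
        ∀ k : Fin n, j < k → G.Adj (σ j) (σ k) → p j ≤ k))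
    (hp2 : ∀ j : Fin n, (¬ ∃ k : Fin n, j < k ∧ G.Adj (σ j) (σ k)) →
      ((p j : ℕ) = n - 1)) :
    (farberTG n p).IsTree ∧
    (∀ (j : Fin n) (q : (farberTG n p).Walk j ⟨n - 1, by omega⟩),
      q.IsPath → q.support.Chain' (· < ·)) ∧
    (∀ l : Fin n, ((farberTG n p).induce (farberSub G σ l)).Connected) ∧
    (∀ k l : Fin n, k ≠ l →
      (G.Adj (σ k) (σ l) ↔ (farberSub G σ k ∩ farberSub G σ l).Nonempty)) := by
  classical
  -- basic step property of `p`
  have hstep : ∀ j : Fin n, (j : ℕ) < n - 1 → j < p j := by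
    intro j hj
    by_cases hex : ∃ k : Fin n, j < k ∧ G.Adj (σ j) (σ k)
    · exact (hp1 j hex).1
    · have := hp2 j hex
      rw [Fin.lt_def, this]
      exact hj
  have hmemN : ∀ a b : α, G.Adj b a → a ∈ closedNbhd G b := by
    intro a b hab
    exact Set.mem_insert_iff.mpr (Or.inr hab)
  have hmemN' : ∀ b : α, b ∈ closedNbhd G b := fun b => Set.mem_insert _ _
  have hNelim : ∀ (a b : Fin n), a ≠ b → σ a ∈ closedNbhd G (σ b) → G.Adj (σ b) (σ a) := by
    intro a b hab hmem
    rcases Set.mem_insert_iff.mp hmem with h1 | h2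
    · exact absurd (σ.injective h1) hab
    · exact h2
  -- connectivity of the host graph
  have hconn : (farberTG n p).Connected := by
    rw [SimpleGraph.connected_iff]
    refine ⟨fun u v => (walkUp hn hstep u).reachable.trans (walkUp hn hstep v).reachable.symm,
      ⟨⟨0, by omega⟩⟩⟩
  -- acyclicity
  have hacyc : (farberTG n p).IsAcyclic := by
    intro v c hc
    have hne : c.support.toFinset.Nonempty :=
      ⟨v, List.mem_toFinset.mpr (SimpleGraph.Walk.start_mem_support c)⟩
    set m := c.support.toFinset.min' hne with hm
    have hmmem : m ∈ c.support := List.mem_toFinset.mp (c.support.toFinset.min'_mem hne)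
    have hminc : ∀ x ∈ c.support, m ≤ x := fun x hx =>
      c.support.toFinset.min'_le x (List.mem_toFinset.mpr hx)
    refine no_min_cycle hstep m (c.rotate m hmmem) (hc.rotate hmmem) ?_
    intro x hx
    rw [SimpleGraph.Walk.support_eq_cons] at hx
    rcases List.mem_cons.mp hx with hx | hx
    · exact le_of_eq hx.symm
    · have := (SimpleGraph.Walk.support_rotate c m hmmem).mem_iff.mp hx
      exact hminc x (List.mem_of_mem_tail this)
  refine ⟨⟨hconn, hacyc⟩, ?_, ?_, ?_⟩
  -- part (b)
  · intro j q hq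
    have := eq_walkUp hn hstep j q hq
    rw [this]
    exact chain_walkUp hn hstep j
  -- part (c)
  · intro l
    have hlmem : l ∈ farberSub G σ l := ⟨le_refl _, hmemN' (σ l)⟩
    have key : ∀ (d : ℕ) (i : Fin n) (hi : i ∈ farberSub G σ l), (l : ℕ) - (i : ℕ) ≤ d →
        ((farberTG n p).induce (farberSub G σ l)).Reachable ⟨i, hi⟩ ⟨l, hlmem⟩ := by
      intro d
      induction d with
      | zero =>
        intro i hi hd
        have : i = l := le_antisymm hi.1 (by rw [Fin.le_def]; omega)
        subst this
        exact SimpleGraph.Reachable.refl _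
      | succ d ih =>
        intro i hi hd
        by_cases hil : i = l
        · subst hil; exact SimpleGraph.Reachable.refl _
        · have hilt : i < l := lt_of_le_of_ne hi.1 hil
          have hG : G.Adj (σ i) (σ l) := (hNelim i l hil hi.2).symm
          obtain ⟨hlt, hadj, hminp⟩ := hp1 i ⟨l, hilt, hG⟩
          have hple : p i ≤ l := hminp l hilt hG
          have hmem : p i ∈ farberSub G σ l := by
            refine ⟨hple, ?_⟩
            by_cases hpl : p i = l
            · rw [hpl]; exact hmemN' (σ l)
            · exact hmemN _ _ (hσ i (p i) l hlt hilt hpl hadj hG).symm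
          have hedge : ((farberTG n p).induce (farberSub G σ l)).Adj ⟨i, hi⟩ ⟨p i, hmem⟩ := by
            show (farberTG n p).Adj i (p i)
            apply farber_adj_p hstep
            have h1 : (i : ℕ) < (l : ℕ) := hilt
            have h2 := l.isLt
            omega
          refine hedge.reachable.trans (ih (p i) hmem ?_)
          have h1 : (i : ℕ) < (p i : ℕ) := hlt
          have h2 : (p i : ℕ) ≤ (l : ℕ) := hple
          omega
    rw [SimpleGraph.connected_iff]
    exact ⟨fun u v => (key _ u.1 u.2 le_rfl).trans (key _ v.1 v.2 le_rfl).symm, ⟨⟨l, hlmem⟩⟩⟩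
  -- part (d)
  · intro k l hkl
    constructor
    · intro hadj
      rcases lt_or_gt_of_ne hkl with h | h
      · exact ⟨k, ⟨le_refl _, hmemN' (σ k)⟩, ⟨le_of_lt h, hmemN _ _ hadj.symm⟩⟩
      · exact ⟨l, ⟨le_of_lt h, hmemN _ _ hadj⟩, ⟨le_refl _, hmemN' (σ l)⟩⟩
    · rintro ⟨i, ⟨hik, hiNk⟩, ⟨hil, hiNl⟩⟩
      by_cases hik' : i = k
      · subst hik'
        exact (hNelim i l hkl hiNl).symm
      · by_cases hil' : i = l
        · subst hil'
          exact hNelim i k (Ne.symm hkl) hiNk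
        · have h1 : G.Adj (σ i) (σ k) := (hNelim i k hik' hiNk).symm
          have h2 : G.Adj (σ i) (σ l) := (hNelim i l hil' hiNl).symm
          exact hσ i k l (lt_of_le_of_ne hik hik') (lt_of_le_of_ne hil hil') hkl h1 h2
end
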